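/- arXiv:2304.00849 — 4 statements merged into one kernel-verified Lean document; each statement's English description precedes it below -/
import Mathlib

section
/- For r ≥ 2 and s ≥ 3 with r,s both odd, the cylinder P_r □ C_s has no 3-antiresolving set; i.e., adim_3(P_r □ C_s) = +∞. -/
open SimpleGraph

/-- Two vertices have the same distances to every vertex of `S`. -/
def sameDists {V : Type*} (G : SimpleGraph V) (S : Set V) (x y : V) : Prop :=
  ∀ z ∈ S, G.dist x z = G.dist y z

/-- The equivalence class (outside `S`) of `x` under the equal-distance relation `R_S`. -/
def cls {V : Type*} (G : SimpleGraph V) (S : Set V) (x : V) : Set V :=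
  {y | y ∉ S ∧ sameDists G S x y}

/-- `S` is a `k`-antiresolving set: `S` is nonempty, does not cover `V`, and the minimum
size of an equivalence class of `R_S` on `V ∖ S` equals `k`. -/
def IsKARS {V : Type*} (G : SimpleGraph V) (k : ℕ) (S : Set V) : Prop :=
  S.Nonempty ∧ Sᶜ.Nonempty ∧
    (∀ x ∉ S, k ≤ (cls G S x).ncard) ∧ ∃ x ∉ S, (cls G S x).ncard = k

/-- The `k`-metric antidimension: the smallest cardinality of a `k`-antiresolving set,
`⊤` (i.e. `+∞`) if none exists. -/
noncomputable def adim {V : Type*} (G : SimpleGraph V) (k : ℕ) : ℕ∞ :=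
  sInf ((fun S => (S.ncard : ℕ∞)) '' {S : Set V | IsKARS G k S})


open SimpleGraph
open Fin.CommRing Fin.NatCast

/-- cyclic distance on `Fin s` -/
def cdist (s : ℕ) (j b : Fin s) : ℕ := min (j - b).val (b - j).val

/-- proposed distance on the cylinder -/
def pD {r s : ℕ} (x z : Fin r × Fin s) : ℕ :=
  Nat.dist x.1.val z.1.val + cdist s x.2 z.2

section arith
variable {s : ℕ}

lemma sub_val_add (hs : 0 < s) (j b : Fin s) :
    (j - b).val + (b - j).val = if j = b then 0 else s := by
  have : NeZero s := ⟨by omega⟩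
  have h0 : (j - b) + (b - j) = 0 := by ring
  have hv : ((j - b).val + (b - j).val) % s = 0 := by
    rw [← Fin.val_add]; rw [h0]; simp
  have h1 : (j - b).val < s := (j - b).isLt
  have h2 : (b - j).val < s := (b - j).isLt
  by_cases hjb : j = b
  · subst hjb; simp
  · have e1 : (j - b) ≠ 0 := fun h => hjb (sub_eq_zero.mp h)
    have e1' : (j - b).val ≠ 0 := fun h => e1 (Fin.ext (by simpa using h))
    obtain ⟨k, hk⟩ := Nat.dvd_of_mod_eq_zero hv
    have hk2 : k < 2 := by
      by_contra hc
      push_neg at hc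
      have : s * 2 ≤ s * k := Nat.mul_le_mul_left s hc
      omega
    rw [if_neg hjb]
    interval_cases k <;> omega

lemma cdist_eq (hs : 0 < s) (j b : Fin s) :
    cdist s j b = min (j - b).val (s - (j - b).val) := by
  have h := sub_val_add hs j b
  have h1 : (j - b).val < s := (j - b).isLt
  unfold cdist
  split at h <;> omega

lemma cdist_comm (j b : Fin s) : cdist s j b = cdist s b j := min_comm _ _

lemma cdist_eq_zero (hs : 0 < s) (j b : Fin s) : cdist s j b = 0 ↔ j = b := by
  have : NeZero s := ⟨by omega⟩
  have h := sub_val_add hs j b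
  constructor
  · intro h0
    unfold cdist at h0
    by_contra hne
    rw [if_neg hne] at h
    have e1 : (j - b) ≠ 0 := fun hh => hne (sub_eq_zero.mp hh)
    have e2 : (b - j) ≠ 0 := fun hh => hne (sub_eq_zero.mp hh).symm
    have e1' : (j - b).val ≠ 0 := fun hh => e1 (Fin.ext (by simpa using hh))
    have e2' : (b - j).val ≠ 0 := fun hh => e2 (Fin.ext (by simpa using hh))
    omega
  · intro h; subst h; simp [cdist]

lemma val_add_one [NeZero s] (hs : 2 ≤ s) (d : Fin s) :
    (d + 1).val = if d.val = s - 1 then 0 else d.val + 1 := by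
  rw [Fin.val_add, Fin.val_one']
  have h1 : d.val < s := d.isLt
  have : 1 % s = 1 := Nat.mod_eq_of_lt (by omega)
  rw [this]
  by_cases h : d.val = s - 1
  · rw [if_pos h]; rw [h]
    have : s - 1 + 1 = s := by omega
    rw [this, Nat.mod_self]
  · rw [if_neg h]; exact Nat.mod_eq_of_lt (by omega)
end arith

section odd
variable {s h : ℕ} [NeZero s]

/-- the half-way element -/
def hhF (s h : ℕ) (hsh : s = 2*h+1) : Fin s := ⟨h, by omega⟩

lemma hh_val (hsh : s = 2*h+1) : (hhF s h hsh).val = h := rfl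

variable (hsh : s = 2*h+1) (hpos : 1 ≤ h)
include hsh hpos

lemma neg_hh_val : (-(hhF s h hsh)).val = h + 1 := by
  have h1 := sub_val_add (s := s) (by omega) 0 (hhF s h hsh)
  have h2 : (0 : Fin s) - hhF s h hsh = -(hhF s h hsh) := by ring
  have h3 : hhF s h hsh - 0 = hhF s h hsh := by ring
  rw [h2, h3] at h1
  have hne : (0 : Fin s) ≠ hhF s h hsh := by
    intro hc
    have : (0 : Fin s).val = h := by rw [hc]; rfl
    simp at this; omega
  rw [if_neg hne] at h1
  have : (hhF s h hsh).val = h := rfl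
  omega

lemma neg_hh : -(hhF s h hsh) = hhF s h hsh + 1 := by
  apply Fin.ext
  rw [neg_hh_val hsh hpos, val_add_one (by omega)]
  rw [hh_val]
  have : ¬ (h = s - 1) := by omega
  rw [if_neg this]

lemma hh_ne_neg : hhF s h hsh ≠ -(hhF s h hsh) := by
  intro hc
  have := congrArg Fin.val hc
  rw [neg_hh_val hsh hpos, hh_val] at this
  omega

lemma add_hh_ne_sub_hh (b : Fin s) : b + hhF s h hsh ≠ b - hhF s h hsh := by
  intro hc
  have : hhF s h hsh = -(hhF s h hsh) := by
    have := hc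
    rw [sub_eq_add_neg] at this
    exact add_left_cancel this
  exact hh_ne_neg hsh hpos this

/-- cdist is bounded by h -/
lemma cdist_le_h (j b : Fin s) : cdist s j b ≤ h := by
  rw [cdist_eq (by omega)]
  have := (j - b).isLt
  omega

/-- characterization of max cdist -/
lemma cdist_eq_h_iff (j b : Fin s) :
    cdist s j b = h ↔ (j = b + hhF s h hsh ∨ j = b - hhF s h hsh) := by
  rw [cdist_eq (by omega)]
  have hlt := (j - b).isLt
  have key : min (j - b).val (s - (j - b).val) = h ↔
      ((j - b).val = h ∨ (j - b).val = h + 1) := by omega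
  rw [key]
  have e1 : (j - b).val = h ↔ j - b = hhF s h hsh := by
    constructor
    · intro hv; exact Fin.ext (by rw [hv]; rfl)
    · intro hv; rw [hv]; rfl
  have e2 : (j - b).val = h + 1 ↔ j - b = -(hhF s h hsh) := by
    constructor
    · intro hv; exact Fin.ext (by rw [hv, neg_hh_val hsh hpos])
    · intro hv; rw [hv, neg_hh_val hsh hpos]
  rw [e1, e2, sub_eq_iff_eq_add, sub_eq_iff_eq_add]
  constructor
  · rintro (hc | hc) <;> [left; right] <;> rw [hc] <;> ring
  · rintro (hc | hc) <;> [left; right] <;> rw [hc] <;> ring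

lemma cdist_add_hh (b : Fin s) : cdist s (b + hhF s h hsh) b = h := by
  rw [cdist_eq_h_iff hsh hpos]; left; rfl

lemma cdist_sub_hh (b : Fin s) : cdist s (b - hhF s h hsh) b = h := by
  rw [cdist_eq_h_iff hsh hpos]; right; rfl

/-- equidistance to adjacent pair w, w+1 happens only at the antipode -/
lemma cdist_succ_eq_iff (w b2 : Fin s) :
    cdist s w b2 = cdist s (w + 1) b2 ↔ w = b2 + hhF s h hsh := by
  have hlt := (w - b2).isLt
  have hstep : (w + 1) - b2 = (w - b2) + 1 := by ring
  rw [cdist_eq (by omega), cdist_eq (by omega), hstep,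
    val_add_one (by omega) (w - b2)]
  have e1 : (w - b2).val = h ↔ w - b2 = hhF s h hsh := by
    constructor
    · intro hv; exact Fin.ext (by rw [hv]; rfl)
    · intro hv; rw [hv]; rfl
  rw [show (w = b2 + hhF s h hsh) ↔ (w - b2 = hhF s h hsh) by
    rw [sub_eq_iff_eq_add]; constructor <;> intro hc <;> rw [hc] <;> ring, ← e1]
  split <;> omega

/-- the key "no equidistant antipodes" lemma -/
lemma cdist_antipodes_ne (b1 b2 : Fin s) (hne : b2 ≠ b1) :
    cdist s (b1 + hhF s h hsh) b2 ≠ cdist s (b1 - hhF s h hsh) b2 := by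
  have hsub : b1 - hhF s h hsh = (b1 + hhF s h hsh) + 1 := by
    rw [sub_eq_add_neg, neg_hh hsh hpos]; ring
  rw [hsub]
  intro hc
  have := (cdist_succ_eq_iff hsh hpos (b1 + hhF s h hsh) b2).mp hc
  have : b1 = b2 := add_right_cancel this
  exact hne this.symm

/-- stepping: hh + hh = -1 -/
lemma hh_add_hh : hhF s h hsh + hhF s h hsh = -1 := by
  apply Fin.ext
  rw [Fin.val_add, hh_val]
  have hn1 : ((-1 : Fin s)).val = s - 1 := by
    have h1 := sub_val_add (s := s) (by omega) 0 1
    have h2 : (0 : Fin s) - 1 = -1 := by ring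
    have h3 : (1 : Fin s) - 0 = 1 := by ring
    rw [h2, h3] at h1
    have hne : (0 : Fin s) ≠ 1 := by
      intro hc
      have := congrArg Fin.val hc
      rw [Fin.val_one'] at this
      simp at this
      omega
    rw [if_neg hne, Fin.val_one'] at h1
    have : 1 % s = 1 := Nat.mod_eq_of_lt (by omega)
    omega
  rw [hn1]
  have : h + h < s := by omega
  rw [Nat.mod_eq_of_lt this]
  omega

end odd

section distform

variable {V : Type*} {G : SimpleGraph V}

lemma walk_lower (f : V → ℕ) (z : V)
    (hf : ∀ u v, G.Adj u v → f u ≤ f v + 1) (hz : f z = 0) :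
    ∀ {u : V} (p : G.Walk u z), f u ≤ p.length := by
  intro u p
  induction p with
  | nil => simp [hz]
  | @cons a b c hab p ih =>
    have := hf _ _ hab
    simp only [SimpleGraph.Walk.length_cons]
    omega

lemma walk_upper (f : V → ℕ) (z : V)
    (h0 : ∀ u, f u = 0 → u = z)
    (hstep : ∀ u, 0 < f u → ∃ v, G.Adj u v ∧ f v < f u) :
    ∀ u : V, ∃ p : G.Walk u z, p.length ≤ f u := by
  intro u
  generalize hn : f u = n
  induction n using Nat.strong_induction_on generalizing u with
  | _ n ih =>
    rcases Nat.eq_zero_or_pos n with h | h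
    · subst h
      have := h0 u hn
      subst this
      exact ⟨SimpleGraph.Walk.nil, by simp⟩
    · obtain ⟨v, hadj, hlt⟩ := hstep u (by omega)
      obtain ⟨p, hp⟩ := ih (f v) (by omega) v rfl
      exact ⟨SimpleGraph.Walk.cons hadj p, by simp; omega⟩

lemma dist_eq_of (f : V → ℕ) (z : V)
    (hf : ∀ u v, G.Adj u v → f u ≤ f v + 1) (hz : f z = 0)
    (h0 : ∀ u, f u = 0 → u = z)
    (hstep : ∀ u, 0 < f u → ∃ v, G.Adj u v ∧ f v < f u)
    (u : V) : G.dist u z = f u := by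
  obtain ⟨p, hp⟩ := walk_upper f z h0 hstep u
  have h1 : G.dist u z ≤ f u := le_trans (SimpleGraph.dist_le p) hp
  have hr : G.Reachable u z := ⟨p⟩
  obtain ⟨q, hq⟩ := hr.exists_walk_length_eq_dist
  have h2 : f u ≤ G.dist u z := hq ▸ walk_lower f z hf hz q
  omega

end distform

section cylinder

variable {r s : ℕ}

lemma pD_self (hs : 0 < s) (z : Fin r × Fin s) : pD z z = 0 := by
  have h1 : (z.2 - z.2).val = 0 := by
    have h := sub_val_add hs z.2 z.2
    simp at h
    omega
  simp [pD, Nat.dist, cdist, h1]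

lemma pD_eq_zero (hs : 0 < s) (u z : Fin r × Fin s) (h : pD u z = 0) : u = z := by
  unfold pD at h
  have h1 : Nat.dist u.1.val z.1.val = 0 := by omega
  have h2 : cdist s u.2 z.2 = 0 := by omega
  have e1 : u.1 = z.1 := Fin.ext (Nat.eq_of_dist_eq_zero h1)
  have e2 : u.2 = z.2 := (cdist_eq_zero hs _ _).mp h2
  exact Prod.ext e1 e2

lemma cdist_adj_le (hs : 3 ≤ s) {u v : Fin s} (hadj : (cycleGraph s).Adj u v)
    (b : Fin s) : cdist s u b ≤ cdist s v b + 1 := by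
  have : NeZero s := ⟨by omega⟩
  rw [cycleGraph_adj'] at hadj
  have hone : (1 : Fin s).val = 1 := by
    rw [Fin.val_one']; exact Nat.mod_eq_of_lt (by omega)
  have key : ∀ w : Fin s, cdist s (w + 1) b ≤ cdist s w b + 1 ∧
      cdist s w b ≤ cdist s (w + 1) b + 1 := by
    intro w
    have hstep : (w + 1) - b = (w - b) + 1 := by ring
    have hlt := (w - b).isLt
    rw [cdist_eq (by omega : 0 < s) (w+1) b, cdist_eq (by omega : 0 < s) w b, hstep,
      val_add_one (by omega) (w - b)]
    split <;> omega
  rcases hadj with h | h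
  · -- (u - v).val = 1, so u = v + 1
    have : u = v + 1 := by
      have : u - v = 1 := Fin.ext (by rw [h, hone])
      rw [← this]; ring
    rw [this]; exact (key v).1
  · have : v = u + 1 := by
      have : v - u = 1 := Fin.ext (by rw [h, hone])
      rw [← this]; ring
    rw [this]; exact (key u).2

lemma pD_adj_le (hs : 3 ≤ s) {u v : Fin r × Fin s}
    (hadj : ((pathGraph r).boxProd (cycleGraph s)).Adj u v) (z : Fin r × Fin s) :
    pD u z ≤ pD v z + 1 := by
  rcases hadj with ⟨hp, he⟩ | ⟨hc, he⟩
  · -- path edge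
    rw [pathGraph_adj] at hp
    unfold pD
    rw [he]
    have : Nat.dist u.1.val z.1.val ≤ Nat.dist v.1.val z.1.val + 1 := by
      simp only [Nat.dist]; omega
    omega
  · -- cycle edge
    unfold pD
    rw [he]
    have := cdist_adj_le hs hc z.2
    omega

lemma val_sub_one [NeZero s] (hs : 2 ≤ s) (d : Fin s) :
    (d - 1).val = if d.val = 0 then s - 1 else d.val - 1 := by
  have h := val_add_one (s := s) hs (d - 1)
  rw [sub_add_cancel] at h
  have hlt := (d - 1).isLt
  have hlt2 := d.isLt
  split at h <;> split <;> omega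

lemma pD_step (hr : 1 ≤ r) (hs : 3 ≤ s) (u z : Fin r × Fin s) (hpos : 0 < pD u z) :
    ∃ v, ((pathGraph r).boxProd (cycleGraph s)).Adj u v ∧ pD v z < pD u z := by
  have : NeZero s := ⟨by omega⟩
  obtain ⟨i, j⟩ := u
  obtain ⟨a, b⟩ := z
  have hone : (1 : Fin s).val = 1 := by
    rw [Fin.val_one']; exact Nat.mod_eq_of_lt (by omega)
  by_cases hia : i = a
  · subst hia
    have hcd : 0 < cdist s j b := by
      unfold pD at hpos; simp [Nat.dist] at hpos; omega
    have hjb : j ≠ b := by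
      intro hc; rw [(cdist_eq_zero (by omega : 0 < s) j b).mpr hc] at hcd; omega
    have he0 : (j - b).val ≠ 0 := by
      intro hc
      exact hjb (sub_eq_zero.mp (Fin.ext (by simpa using hc)))
    have hlt := (j - b).isLt
    rcases le_or_gt (j - b).val (s - (j - b).val) with hle | hgt
    · -- move to j - 1
      refine ⟨(i, j - 1), ?_, ?_⟩
      · exact SimpleGraph.boxProd_adj.mpr (Or.inr ⟨cycleGraph_adj'.mpr
          (Or.inl (by rw [show j - (j - 1) = 1 by ring, hone])), rfl⟩)
      · unfold pD
        have hsub : (j - 1) - b = (j - b) - 1 := by ring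
        rw [cdist_eq (by omega : 0 < s) (j-1) b, cdist_eq (by omega : 0 < s) j b, hsub,
          val_sub_one (by omega)]
        rw [if_neg he0]
        simp only [Nat.dist]
        omega
    · -- move to j + 1
      refine ⟨(i, j + 1), ?_, ?_⟩
      · exact SimpleGraph.boxProd_adj.mpr (Or.inr ⟨cycleGraph_adj'.mpr
          (Or.inr (by rw [show (j + 1) - j = 1 by ring, hone])), rfl⟩)
      · unfold pD
        have hsub : (j + 1) - b = (j - b) + 1 := by ring
        rw [cdist_eq (by omega : 0 < s) (j+1) b, cdist_eq (by omega : 0 < s) j b, hsub,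
          val_add_one (by omega)]
        simp only [Nat.dist]
        split <;> omega
  · rcases Nat.lt_or_ge i.val a.val with hlt | hge
    · refine ⟨(⟨i.val+1, by omega⟩, j), ?_, ?_⟩
      · exact SimpleGraph.boxProd_adj.mpr (Or.inl ⟨pathGraph_adj.mpr (Or.inl rfl), rfl⟩)
      · unfold pD; simp only [Nat.dist]; simp; omega
    · have hgt : a.val < i.val := by
        rcases Nat.lt_or_ge a.val i.val with h | h
        · exact h
        · exact absurd (Fin.ext (by omega)) hia
      refine ⟨(⟨i.val-1, by omega⟩, j), ?_, ?_⟩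
      · exact SimpleGraph.boxProd_adj.mpr (Or.inl ⟨pathGraph_adj.mpr
          (Or.inr (by simp; omega)), rfl⟩)
      · unfold pD; simp only [Nat.dist]; simp; omega

lemma dist_eq_pD (hr : 1 ≤ r) (hs : 3 ≤ s) (x z : Fin r × Fin s) :
    ((pathGraph r).boxProd (cycleGraph s)).dist x z = pD x z :=
  dist_eq_of (fun u => pD u z) z (fun u v h => pD_adj_le hs h z) (pD_self (by omega) z)
    (fun u h => pD_eq_zero (by omega) u z h) (fun u h => pD_step hr hs u z h) x

end cylinder

lemma no3ars (r s : ℕ) (hr : 2 ≤ r) (hs : 3 ≤ s) (hro : Odd r) (hso : Odd s)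
    (S : Set (Fin r × Fin s)) :
    ¬ IsKARS ((pathGraph r).boxProd (cycleGraph s)) 3 S := by
  obtain ⟨m, hrm⟩ := hro
  obtain ⟨h, hsh⟩ := hso
  have hm1 : 1 ≤ m := by omega
  have hp1 : 1 ≤ h := by omega
  have _inst : NeZero s := ⟨by omega⟩
  set G := (pathGraph r).boxProd (cycleGraph s) with hG
  have hdist : ∀ x z : Fin r × Fin s, G.dist x z = pD x z :=
    dist_eq_pD (by omega) hs
  have pair_bound : ∀ (A : Set (Fin r × Fin s)) (u v : Fin r × Fin s),
      A ⊆ {u, v} → A.ncard ≤ 2 := by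
    intro A u v hsub
    refine (Set.ncard_le_ncard hsub (Set.toFinite _)).trans ?_
    refine (Set.ncard_insert_le _ _).trans (by simp)
  have one_bound : ∀ (A : Set (Fin r × Fin s)) (u : Fin r × Fin s),
      A ⊆ {u} → A.ncard ≤ 1 := fun A u hsub =>
    (Set.ncard_le_ncard hsub (Set.toFinite _)).trans (by simp)
  obtain ⟨P0, hP0⟩ : ∃ x : Fin r, x.val = 0 := ⟨⟨0, by omega⟩, rfl⟩
  obtain ⟨P1, hP1⟩ : ∃ x : Fin r, x.val = r - 1 := ⟨⟨r - 1, by omega⟩, rfl⟩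
  obtain ⟨mm, hmm⟩ : ∃ x : Fin r, x.val = m := ⟨⟨m, by omega⟩, rfl⟩
  rintro ⟨Sne, Scne, Hmin, x3, hx3S, hx3c⟩
  -- the "far sphere" membership lemma
  have sphere : ∀ (a : Fin r) (b : Fin s), ∀ y : Fin r × Fin s,
      pD y (a, b) = (max a.val (r - 1 - a.val)) + h →
        (Nat.dist y.1.val a.val = max a.val (r - 1 - a.val) ∧
          (y.2 = b + hhF s h hsh ∨ y.2 = b - hhF s h hsh)) := by
    intro a b y hy
    have h1 : Nat.dist y.1.val a.val ≤ max a.val (r - 1 - a.val) := by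
      have := y.1.isLt; have := a.isLt; simp only [Nat.dist]; omega
    have h2 : cdist s y.2 b ≤ h := cdist_le_h hsh hp1 y.2 b
    have hy : Nat.dist y.1.val a.val + cdist s y.2 b = max a.val (r - 1 - a.val) + h := hy
    have e1 : Nat.dist y.1.val a.val = max a.val (r - 1 - a.val) := by omega
    have e2 : cdist s y.2 b = h := by omega
    exact ⟨e1, (cdist_eq_h_iff hsh hp1 y.2 b).mp e2⟩
  have pD_far : ∀ (a : Fin r) (b : Fin s) (c : Fin s),
      (c = b + hhF s h hsh ∨ c = b - hhF s h hsh) →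
      ∀ i : Fin r, pD (i, c) (a, b) = Nat.dist i.val a.val + h := by
    intro a b c hc i
    unfold pD
    rcases hc with hc | hc <;> rw [hc]
    · rw [cdist_add_hh hsh hp1]
    · rw [cdist_sub_hh hsh hp1]
  -- case A: some element of S off the middle column
  by_cases hA : ∃ z ∈ S, z.1.val ≠ m
  · obtain ⟨⟨a, b⟩, hzS, hzm⟩ := hA
    simp only at hzm
    have far_in_S : ∀ (a : Fin r) (b : Fin s), (a, b) ∈ S → a.val ≠ m →
        ∀ c : Fin s, (c = b + hhF s h hsh ∨ c = b - hhF s h hsh) →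
          ((if a.val < m then P1 else P0), c) ∈ S := by
      intro a b hab ham c hc
      set e : Fin r := if a.val < m then P1 else P0 with he
      have hev : Nat.dist e.val a.val = max a.val (r - 1 - a.val) := by
        have := a.isLt
        by_cases hlt : a.val < m
        · rw [he, if_pos hlt, hP1]; simp only [Nat.dist]; omega
        · rw [he, if_neg hlt, hP0]; simp only [Nat.dist]; omega
      by_contra hcS
      have h3 := Hmin (e, c) hcS
      have hsub : cls G S (e, c) ⊆ {(e, b + hhF s h hsh), (e, b - hhF s h hsh)} := by
        intro y hy
        obtain ⟨hyS, hyd⟩ := hy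
        have hdy : G.dist (e, c) (a, b) = G.dist y (a, b) := hyd (a, b) hab
        rw [hdist, hdist] at hdy
        have hec : pD (e, c) (a, b) = max a.val (r - 1 - a.val) + h := by
          rw [pD_far a b c hc e, hev]
        rw [hec] at hdy
        obtain ⟨hy1, hy2⟩ := sphere a b y hdy.symm
        have hy1' : y.1 = e := by
          apply Fin.ext
          have := y.1.isLt; have := a.isLt; have := e.isLt
          simp only [Nat.dist] at hy1
          by_cases hlt : a.val < m
          · rw [he, if_pos hlt, hP1]; omega
          · rw [he, if_neg hlt, hP0]; omega
        simp only [Set.mem_insert_iff, Set.mem_singleton_iff]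
        rcases hy2 with hc2 | hc2
        · left; exact Prod.ext hy1' hc2
        · right; exact Prod.ext hy1' hc2
      have := pair_bound _ _ _ hsub
      omega
    -- derive: all endpoint rows are in S
    have both0 : ∀ c : Fin s, (P0, c) ∈ S →
        ∀ d : Fin s, (d = c + hhF s h hsh ∨ d = c - hhF s h hsh) → (P1, d) ∈ S := by
      intro c hc d hd
      have := far_in_S P0 c hc (by omega) d hd
      rwa [if_pos (by omega)] at this
    have both1 : ∀ c : Fin s, (P1, c) ∈ S →
        ∀ d : Fin s, (d = c + hhF s h hsh ∨ d = c - hhF s h hsh) → (P0, d) ∈ S := by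
      intro c hc d hd
      have := far_in_S P1 c hc (by omega) d hd
      rwa [if_neg (by omega)] at this
    have step0 : ∀ c : Fin s, (P0, c) ∈ S → (P0, c + 1) ∈ S := by
      intro c hc
      have h1 : (P1, c - hhF s h hsh) ∈ S := both0 c hc _ (Or.inr rfl)
      have h2 : (P0, c - hhF s h hsh - hhF s h hsh) ∈ S := both1 _ h1 _ (Or.inr rfl)
      have : c - hhF s h hsh - hhF s h hsh = c + 1 := by
        rw [sub_sub, hh_add_hh hsh hp1]; ring
      rwa [this] at h2
    have all0 : ∀ c : Fin s, (P0, c) ∈ S → ∀ k : ℕ, (P0, c + (k : Fin s)) ∈ S := by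
      intro c hc k
      induction k with
      | zero => simpa using hc
      | succ n ih =>
        have := step0 _ ih
        have hcast : c + ((n : Fin s) + 1) = c + ((n + 1 : ℕ) : Fin s) := by push_cast; ring
        rwa [add_assoc, hcast] at this
    have allP0 : (∃ c, (P0, c) ∈ S) → ∀ j : Fin s, (P0, j) ∈ S := by
      rintro ⟨c, hc⟩ j
      have := all0 c hc (j - c).val
      rwa [Fin.cast_val_eq_self, add_sub_cancel] at this
    have hseed : ∃ c, (P0, c) ∈ S := by
      by_cases hlt : a.val < m
      · have h1 : (P1, b + hhF s h hsh) ∈ S := by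
          have := far_in_S a b hzS hzm _ (Or.inl rfl)
          rwa [if_pos hlt] at this
        exact ⟨_, both1 _ h1 _ (Or.inl rfl)⟩
      · have h1 : (P0, b + hhF s h hsh) ∈ S := by
          have := far_in_S a b hzS hzm _ (Or.inl rfl)
          rwa [if_neg hlt] at this
        exact ⟨_, h1⟩
    have hall0 := allP0 hseed
    have hall1 : ∀ j : Fin s, (P1, j) ∈ S := by
      intro j
      have := both0 (j - hhF s h hsh) (hall0 _) j (Or.inl (by ring))
      exact this
    -- now any vertex outside S has a singleton class
    obtain ⟨x, hxS⟩ := Scne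
    have hx3 := Hmin x hxS
    have hsub : cls G S x ⊆ {x} := by
      intro y hy
      obtain ⟨hyS, hyd⟩ := hy
      have e1 : G.dist x (P0, x.2) = G.dist y (P0, x.2) := hyd _ (hall0 x.2)
      have e2 : G.dist x (P1, x.2) = G.dist y (P1, x.2) := hyd _ (hall1 x.2)
      rw [hdist, hdist] at e1 e2
      unfold pD at e1 e2
      simp only [hP0, hP1] at e1 e2
      have hxx : cdist s x.2 x.2 = 0 := (cdist_eq_zero (by omega) _ _).mpr rfl
      rw [hxx] at e1 e2
      have hb1 := x.1.isLt
      have hb2 := y.1.isLt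
      have hcd : cdist s y.2 x.2 = 0 ∧ y.1.val = x.1.val := by
        simp only [Nat.dist] at e1 e2
        omega
      have hy2 : y.2 = x.2 := (cdist_eq_zero (by omega) _ _).mp hcd.1
      have : y = x := Prod.ext (Fin.ext hcd.2) hy2
      simp [this]
    have := one_bound _ _ hsub
    omega
  · push_neg at hA
    by_cases hB : ∃ z1 ∈ S, ∃ z2 ∈ S, (z1 : Fin r × Fin s).2 ≠ z2.2
    · -- two distinct middle-column elements of S
      obtain ⟨z1, hz1, z2, hz2, hne⟩ := hB
      have hz1e : z1 = (mm, z1.2) := Prod.ext (Fin.ext (by rw [hA z1 hz1, hmm])) rfl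
      have hz2e : z2 = (mm, z2.2) := Prod.ext (Fin.ext (by rw [hA z2 hz2, hmm])) rfl
      set b1 := z1.2 with hb1
      set b2 := z2.2 with hb2
      have hx0S : ((P0 : Fin r), b1 + hhF s h hsh) ∉ S := by
        intro hc
        have := hA _ hc
        simp only [hP0] at this
        omega
      have h3 := Hmin _ hx0S
      have hsub : cls G S (P0, b1 + hhF s h hsh) ⊆
          {(P0, b1 + hhF s h hsh), (P1, b1 + hhF s h hsh)} := by
        intro y hy
        obtain ⟨hyS, hyd⟩ := hy
        have e1 : G.dist (P0, b1 + hhF s h hsh) z1 = G.dist y z1 := hyd _ hz1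
        have e2 : G.dist (P0, b1 + hhF s h hsh) z2 = G.dist y z2 := hyd _ hz2
        rw [hdist, hdist] at e1 e2
        rw [hz1e] at e1
        rw [hz2e] at e2
        have hv1 : pD (P0, b1 + hhF s h hsh) (mm, b1) = m + h := by
          rw [pD_far mm b1 _ (Or.inl rfl)]
          simp only [hP0, hmm, Nat.dist]
          omega
        -- max-distance analysis from (mm, b1)
        have hrmax : max mm.val (r - 1 - mm.val) = m := by rw [hmm]; omega
        rw [hv1] at e1
        have hsp := sphere mm b1 y (by rw [hrmax]; omega)
        obtain ⟨hy1, hy2⟩ := hsp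
        rw [hrmax] at hy1
        -- second landmark kills the antipodal option
        have hy2' : y.2 = b1 + hhF s h hsh := by
          rcases hy2 with hc | hc
          · exact hc
          · exfalso
            have hx1 : Nat.dist P0.val mm.val = m := by
              simp only [hP0, hmm, Nat.dist]; omega
            have e2' : Nat.dist P0.val mm.val + cdist s (b1 + hhF s h hsh) b2
                = Nat.dist y.1.val mm.val + cdist s y.2 b2 := e2
            rw [hx1, hy1, hc] at e2'
            exact cdist_antipodes_ne hsh hp1 b1 b2 (fun hcc => hne hcc.symm) (by omega)
        have hy1' : y.1 = P0 ∨ y.1 = P1 := by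
          simp only [Nat.dist, hmm] at hy1
          have := y.1.isLt
          rcases (by omega : y.1.val = 0 ∨ y.1.val = r - 1) with hc | hc
          · left; exact Fin.ext (by rw [hc, hP0])
          · right; exact Fin.ext (by rw [hc, hP1])
        simp only [Set.mem_insert_iff, Set.mem_singleton_iff]
        rcases hy1' with hc | hc
        · left; exact Prod.ext hc hy2'
        · right; exact Prod.ext hc hy2'
      have := pair_bound _ _ _ hsub
      omega
    · -- S is a single middle vertex; use the reflection involution
      push_neg at hB
      obtain ⟨z0, hz0⟩ := Sne
      set bb := z0.2 with hbb
      have hSsub : ∀ z ∈ S, z = (mm, bb) := by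
        intro z hz
        exact Prod.ext (Fin.ext (by rw [hA z hz, hmm])) (hB z hz z0 hz0)
      have hz0mm : z0 = (mm, bb) := hSsub z0 hz0
      set σ : Fin r × Fin s → Fin r × Fin s := fun y =>
        if y.2 = bb then (⟨r - 1 - y.1.val, by omega⟩, y.2) else (y.1, bb + (bb - y.2))
        with hσ
      have hσ1 : ∀ (i : Fin r) (j : Fin s), j = bb →
          σ (i, j) = (⟨r - 1 - i.val, by omega⟩, j) := by
        intro i j hj
        rw [hσ]
        simp [hj]
      have hσ2 : ∀ (i : Fin r) (j : Fin s), j ≠ bb →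
          σ (i, j) = (i, bb + (bb - j)) := by
        intro i j hj
        rw [hσ]
        simp [hj]
      have hbne : ∀ j : Fin s, j ≠ bb → bb + (bb - j) ≠ bb := by
        intro j hj hc
        have : bb - j = 0 := add_eq_left.mp hc
        exact hj (sub_eq_zero.mp this).symm
      have hσd : ∀ y, pD (σ y) (mm, bb) = pD y (mm, bb) := by
        rintro ⟨y1, y2⟩
        by_cases hc : y2 = bb
        · rw [hσ1 y1 y2 hc]
          have hlt := y1.isLt
          have : Nat.dist (r - 1 - y1.val) mm.val = Nat.dist y1.val mm.val := by
            simp only [Nat.dist, hmm]; omega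
          show Nat.dist (r - 1 - y1.val) mm.val + cdist s y2 bb
            = Nat.dist y1.val mm.val + cdist s y2 bb
          rw [this]
        · rw [hσ2 y1 y2 hc]
          show Nat.dist y1.val mm.val + cdist s (bb + (bb - y2)) bb
            = Nat.dist y1.val mm.val + cdist s y2 bb
          congr 1
          unfold cdist
          rw [show bb + (bb - y2) - bb = bb - y2 by ring,
            show bb - (bb + (bb - y2)) = y2 - bb by ring]
          exact min_comm _ _
      have hσS : ∀ y : Fin r × Fin s, y ∉ S → σ y ∉ S := by
        rintro ⟨y1, y2⟩ hyS hc
        have hcm := hSsub _ hc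
        by_cases hc2 : y2 = bb
        · rw [hσ1 y1 y2 hc2] at hcm
          have h1 : r - 1 - y1.val = m := by
            have := congrArg (fun p => (Prod.fst p).val) hcm
            simpa [hmm] using this
          have hy1m : y1.val = m := by
            have := y1.isLt
            omega
          have hymb : (y1, y2) = (mm, bb) := by
            refine Prod.ext (Fin.ext ?_) hc2
            rw [hmm]; exact hy1m
          exact hyS (by rw [hymb, ← hz0mm]; exact hz0)
        · rw [hσ2 y1 y2 hc2] at hcm
          have := congrArg Prod.snd hcm
          simp only at this
          exact hbne y2 hc2 this
      have hσσ : ∀ y, σ (σ y) = y := by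
        rintro ⟨y1, y2⟩
        by_cases hc : y2 = bb
        · rw [hσ1 y1 y2 hc, hσ1 _ y2 hc]
          refine Prod.ext (Fin.ext ?_) rfl
          have := y1.isLt
          show r - 1 - (r - 1 - y1.val) = y1.val
          omega
        · rw [hσ2 y1 y2 hc, hσ2 _ _ (hbne y2 hc)]
          refine Prod.ext rfl ?_
          show bb + (bb - (bb + (bb - y2))) = y2
          rw [show bb - (bb + (bb - y2)) = y2 - bb by ring]
          rw [show bb + (y2 - bb) = y2 by ring]
      have hσfix : ∀ y : Fin r × Fin s, y ∉ S → σ y ≠ y := by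
        rintro ⟨y1, y2⟩ hyS hc
        by_cases hc2 : y2 = bb
        · rw [hσ1 y1 y2 hc2] at hc
          have h1 : r - 1 - y1.val = y1.val := by
            have := congrArg (fun p => (Prod.fst p).val) hc
            simpa using this
          have hlt := y1.isLt
          have hymb : (y1, y2) = (mm, bb) := by
            refine Prod.ext (Fin.ext ?_) hc2
            rw [hmm]; show y1.val = m; omega
          exact hyS (by rw [hymb, ← hz0mm]; exact hz0)
        · rw [hσ2 y1 y2 hc2] at hc
          have h2 : bb + (bb - y2) = y2 := congrArg Prod.snd hc
          set t : Fin s := bb - y2 with ht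
          have ht0 : t ≠ 0 := by
            intro hcc
            exact hc2 (sub_eq_zero.mp hcc).symm
          have htt : t + t = 0 := by
            have h3 : (bb - y2) + (bb - y2) = (bb + (bb - y2)) - y2 := by ring
            rw [ht, h3, h2, sub_self]
          have hv : (t.val + t.val) % s = 0 := by
            rw [← Fin.val_add, htt]; simp
          have htv : t.val ≠ 0 := fun hcc => ht0 (Fin.ext (by simpa using hcc))
          have hlt := t.isLt
          obtain ⟨k, hk⟩ := Nat.dvd_of_mod_eq_zero hv
          have hk2 : k < 2 := by
            by_contra hcc
            push_neg at hcc
            have : s * 2 ≤ s * k := Nat.mul_le_mul_left s hcc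
            omega
          interval_cases k <;> omega
      -- now the 3-element class gives a contradiction
      obtain ⟨p, q, t3, hpq, hpt, hqt, hC⟩ := Set.ncard_eq_three.mp hx3c
      have hmem : ∀ y ∈ cls G S x3, σ y ∈ cls G S x3 := by
        intro y hy
        obtain ⟨hyS, hyd⟩ := hy
        refine ⟨hσS y hyS, ?_⟩
        intro z hz
        rw [hSsub z hz]
        rw [hdist, hdist, hσd]
        rw [← hdist, ← hdist]
        exact hyd _ (hSsub z hz ▸ hz)
      have hnfix : ∀ y ∈ cls G S x3, σ y ≠ y := by
        intro y hy
        exact hσfix y hy.1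
      have hpC : p ∈ cls G S x3 := by rw [hC]; simp
      have hqC : q ∈ cls G S x3 := by rw [hC]; simp
      have htC : t3 ∈ cls G S x3 := by rw [hC]; simp
      have hσp := hmem p hpC
      have hσq := hmem q hqC
      have hσt := hmem t3 htC
      rw [hC] at hσp hσq hσt
      simp only [Set.mem_insert_iff, Set.mem_singleton_iff] at hσp hσq hσt
      have hσp' := hnfix p hpC
      have hσq' := hnfix q hqC
      have hσt' := hnfix t3 htC
      rcases hσp with h1 | h1 | h1
      · exact hσp' h1
      · -- σ p = q
        have hq' : σ q = p := by rw [← h1, hσσ]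
        rcases hσt with h2 | h2 | h2
        · -- σ t3 = p, so t3 = σ p = q
          have : t3 = q := by rw [← hσσ t3, h2, h1]
          exact hqt this.symm
        · have : t3 = p := by rw [← hσσ t3, h2, hq']
          exact hpt this.symm
        · exact hσt' h2
      · -- σ p = t3
        have ht' : σ t3 = p := by rw [← h1, hσσ]
        rcases hσq with h2 | h2 | h2
        · have : q = t3 := by rw [← hσσ q, h2, h1]
          exact hqt this
        · exact hσq' h2
        · have : q = p := by rw [← hσσ q, h2, ht']
          exact hpq this.symm


/-- For odd `r, s` with `r ≥ 2`, `s ≥ 3`, the cylinder `P_r □ C_s` has no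
3-antiresolving set, i.e. `adim_3(P_r □ C_s) = +∞`. -/
theorem stmt12 (r s : ℕ) (hr : 2 ≤ r) (hs : 3 ≤ s) (hro : Odd r) (hso : Odd s) :
    (¬∃ S : Set (Fin r × Fin s), IsKARS ((pathGraph r).boxProd (cycleGraph s)) 3 S) ∧
    adim ((pathGraph r).boxProd (cycleGraph s)) 3 = ⊤ := by
  have hmain : ∀ S : Set (Fin r × Fin s),
      ¬ IsKARS ((pathGraph r).boxProd (cycleGraph s)) 3 S :=
    fun S => no3ars r s hr hs hro hso S
  refine ⟨fun ⟨S, hS⟩ => hmain S hS, ?_⟩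
  rw [adim]
  have hempty : {S : Set (Fin r × Fin s) |
      IsKARS ((pathGraph r).boxProd (cycleGraph s)) 3 S} = ∅ := by
    ext S; simp only [Set.mem_setOf_eq, Set.mem_empty_iff_false, iff_false]
    exact hmain S
  rw [hempty]
  simp
end

section
/- For r ≥ 4, the Hamming graph K_r □ K_r is (2r−2)-metric antidimensional and adim_{2r−2}(K_r □ K_r) = 1: every single vertex is a (2r−2)-ARS, and no k-ARS exists for k > 2r−2. -/
open SimpleGraph

variable {r : ℕ}


lemma hg_adj {x y : Fin r × Fin r} :
    ((⊤ : SimpleGraph (Fin r)).boxProd (⊤ : SimpleGraph (Fin r))).Adj x y ↔ (x.1 = y.1 ∧ x.2 ≠ y.2) ∨ (x.2 = y.2 ∧ x.1 ≠ y.1) := by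
  rw [boxProd_adj]; simp [top_adj]; tauto

lemma hg_conn (hr : 1 ≤ r) : ((⊤ : SimpleGraph (Fin r)).boxProd (⊤ : SimpleGraph (Fin r))).Connected := by
  have : Nonempty (Fin r) := ⟨⟨0, hr⟩⟩
  exact Connected.boxProd connected_top connected_top

lemma hg_dist_two (hr : 1 ≤ r) {x y : Fin r × Fin r} (hne : x ≠ y) (hadj : ¬ ((⊤ : SimpleGraph (Fin r)).boxProd (⊤ : SimpleGraph (Fin r))).Adj x y) :
    ((⊤ : SimpleGraph (Fin r)).boxProd (⊤ : SimpleGraph (Fin r))).dist x y = 2 := by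
  have h1 : x.1 ≠ y.1 ∧ x.2 ≠ y.2 := by
    rw [hg_adj] at hadj
    push_neg at hadj
    rcases eq_or_ne x.1 y.1 with h | h
    · exact absurd (Prod.ext h (hadj.1 h)) hne
    · exact ⟨h, fun h2 => h (hadj.2 h2)⟩
  have hw : ((⊤ : SimpleGraph (Fin r)).boxProd (⊤ : SimpleGraph (Fin r))).Adj x (y.1, x.2) := by rw [hg_adj]; simp [h1.1]
  have hw2 : ((⊤ : SimpleGraph (Fin r)).boxProd (⊤ : SimpleGraph (Fin r))).Adj (y.1, x.2) y := by
    rw [hg_adj]; left; exact ⟨rfl, h1.2⟩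
  have hle : ((⊤ : SimpleGraph (Fin r)).boxProd (⊤ : SimpleGraph (Fin r))).dist x y ≤ 2 := by
    have := SimpleGraph.dist_le (Walk.cons hw (Walk.cons hw2 Walk.nil))
    simpa using this
  have h0 : 0 < ((⊤ : SimpleGraph (Fin r)).boxProd (⊤ : SimpleGraph (Fin r))).dist x y :=
    (hg_conn hr).pos_dist_of_ne hne
  have hone : ((⊤ : SimpleGraph (Fin r)).boxProd (⊤ : SimpleGraph (Fin r))).dist x y ≠ 1 :=
    fun h => hadj (dist_eq_one_iff_adj.mp h)
  omega

/-- distance-1 sphere around x, as a Finset -/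
def nbr (x : Fin r × Fin r) : Finset (Fin r × Fin r) :=
  ({x.1} ×ˢ {x.2}ᶜ) ∪ ({x.1}ᶜ ×ˢ {x.2})

/-- distance-2 sphere around x, as a Finset -/
def far (x : Fin r × Fin r) : Finset (Fin r × Fin r) :=
  {x.1}ᶜ ×ˢ {x.2}ᶜ

lemma mem_nbr {x y : Fin r × Fin r} : y ∈ nbr x ↔ ((⊤ : SimpleGraph (Fin r)).boxProd (⊤ : SimpleGraph (Fin r))).Adj y x := by
  simp only [nbr, Finset.mem_union, Finset.mem_product, Finset.mem_singleton,
    Finset.mem_compl, hg_adj]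
  tauto

lemma mem_far {x y : Fin r × Fin r} : y ∈ far x ↔ y.1 ≠ x.1 ∧ y.2 ≠ x.2 := by
  simp only [far, Finset.mem_product, Finset.mem_compl, Finset.mem_singleton]

lemma card_nbr (x : Fin r × Fin r) : (nbr x).card = 2 * r - 2 := by
  have hd : Disjoint (({x.1} : Finset (Fin r)) ×ˢ ({x.2}ᶜ : Finset (Fin r)))
      (({x.1}ᶜ : Finset (Fin r)) ×ˢ ({x.2} : Finset (Fin r))) := by
    rw [Finset.disjoint_left]
    intro a ha hb
    simp only [Finset.mem_union, Finset.mem_product, Finset.mem_singleton,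
      Finset.mem_compl] at ha hb
    exact hb.1 ha.1
  rw [nbr, Finset.card_union_of_disjoint hd]
  simp only [Finset.card_product, Finset.card_compl, Finset.card_singleton, Fintype.card_fin]
  omega

lemma card_far (x : Fin r × Fin r) : (far x).card = (r - 1) * (r - 1) := by
  simp only [far, Finset.card_product, Finset.card_compl, Finset.card_singleton,
    Fintype.card_fin]

lemma hg_dist_char (hr : 1 ≤ r) {x y : Fin r × Fin r} :
    ((⊤ : SimpleGraph (Fin r)).boxProd (⊤ : SimpleGraph (Fin r))).dist y x = 2 ↔ y.1 ≠ x.1 ∧ y.2 ≠ x.2 := by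
  constructor
  · intro h
    by_contra hc
    rcases eq_or_ne y x with rfl | hne
    · simp [SimpleGraph.dist_self] at h
    by_cases ha : ((⊤ : SimpleGraph (Fin r)).boxProd (⊤ : SimpleGraph (Fin r))).Adj y x
    · rw [dist_eq_one_iff_adj.mpr ha] at h; omega
    · have h1 : y.1 ≠ x.1 ∧ y.2 ≠ x.2 := by
        rw [hg_adj] at ha
        push_neg at ha
        rcases eq_or_ne y.1 x.1 with h' | h'
        · exact absurd (Prod.ext h' (ha.1 h')) hne
        · exact ⟨h', fun h2 => h' (ha.2 h2)⟩
      exact hc h1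
  · intro h
    have hne : y ≠ x := fun he => h.1 (by rw [he])
    have hadj : ¬ ((⊤ : SimpleGraph (Fin r)).boxProd (⊤ : SimpleGraph (Fin r))).Adj y x := by
      rw [hg_adj]; push_neg
      exact ⟨fun h' => absurd h' h.1, fun h' => absurd h' h.2⟩
    exact hg_dist_two hr hne hadj

lemma cls_singleton_adj (hr : 1 ≤ r) {x x0 : Fin r × Fin r} (h : ((⊤ : SimpleGraph (Fin r)).boxProd (⊤ : SimpleGraph (Fin r))).Adj x0 x) :
    cls ((⊤ : SimpleGraph (Fin r)).boxProd (⊤ : SimpleGraph (Fin r))) {x} x0 = ↑(nbr x) := by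
  ext y
  simp only [cls, sameDists, Set.mem_setOf_eq, Set.mem_singleton_iff, Finset.coe_sort_coe,
    Finset.mem_coe, mem_nbr]
  constructor
  · rintro ⟨hy, hd⟩
    have := hd x rfl
    rw [dist_eq_one_iff_adj.mpr h] at this
    exact dist_eq_one_iff_adj.mp this.symm
  · intro hy
    refine ⟨hy.ne, ?_⟩
    rintro z rfl
    rw [dist_eq_one_iff_adj.mpr h, dist_eq_one_iff_adj.mpr hy]

lemma cls_singleton_far (hr : 1 ≤ r) {x x0 : Fin r × Fin r} (h : ((⊤ : SimpleGraph (Fin r)).boxProd (⊤ : SimpleGraph (Fin r))).dist x0 x = 2) :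
    cls ((⊤ : SimpleGraph (Fin r)).boxProd (⊤ : SimpleGraph (Fin r))) {x} x0 = ↑(far x) := by
  ext y
  simp only [cls, sameDists, Set.mem_setOf_eq, Set.mem_singleton_iff, Finset.coe_sort_coe,
    Finset.mem_coe, mem_far]
  constructor
  · rintro ⟨hy, hd⟩
    have := hd x rfl
    rw [h] at this
    exact (hg_dist_char hr).mp this.symm
  · intro hy
    have h2 : ((⊤ : SimpleGraph (Fin r)).boxProd (⊤ : SimpleGraph (Fin r))).dist y x = 2 := (hg_dist_char hr).mpr hy
    refine ⟨?_, ?_⟩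
    · intro he; subst he; simp [SimpleGraph.dist_self] at h2
    · rintro z rfl; rw [h, h2]

lemma singleton_KARS (hr : 4 ≤ r) (x : Fin r × Fin r) :
    IsKARS ((⊤ : SimpleGraph (Fin r)).boxProd (⊤ : SimpleGraph (Fin r))) (2 * r - 2) {x} := by
  have hr1 : 1 ≤ r := by omega
  have hnt : ∃ c : Fin r, c ≠ x.1 := by
    have : Nontrivial (Fin r) := Fin.nontrivial_iff_two_le.mpr (by omega)
    exact exists_ne x.1
  obtain ⟨c, hc⟩ := hnt
  have hx0 : ((⊤ : SimpleGraph (Fin r)).boxProd (⊤ : SimpleGraph (Fin r))).Adj (c, x.2) x := by rw [hg_adj]; right; exact ⟨rfl, hc⟩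
  refine ⟨Set.singleton_nonempty x, ⟨(c, x.2), fun h => hc (congrArg Prod.fst (Set.mem_singleton_iff.mp h))⟩, ?_, ?_⟩
  · intro y hy
    have hyne : y ≠ x := fun h => hy (by rw [h]; rfl)
    by_cases ha : ((⊤ : SimpleGraph (Fin r)).boxProd (⊤ : SimpleGraph (Fin r))).Adj y x
    · rw [cls_singleton_adj hr1 ha, Set.ncard_coe_finset, card_nbr]
    · rw [cls_singleton_far hr1 (hg_dist_two hr1 hyne ha), Set.ncard_coe_finset, card_far]
      have h1 : 2 * r - 2 = 2 * (r - 4) + 6 := by omega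
      have h2 : r - 1 = (r - 4) + 3 := by omega
      rw [h1, h2]; nlinarith
  · refine ⟨(c, x.2), fun h => hc (congrArg Prod.fst (Set.mem_singleton_iff.mp h)), ?_⟩
    rw [cls_singleton_adj hr1 hx0, Set.ncard_coe_finset, card_nbr]

lemma no_big_KARS (hr : 4 ≤ r) (k : ℕ) (hk : 2 * r - 2 < k) :
    ¬∃ S : Set (Fin r × Fin r), IsKARS ((⊤ : SimpleGraph (Fin r)).boxProd (⊤ : SimpleGraph (Fin r))) k S := by
  rintro ⟨S, hS⟩
  obtain ⟨s, hs⟩ := hS.1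
  obtain ⟨v, hv⟩ := hS.2.1
  have hv' : v ∉ S := hv
  -- find s' ∈ S and u ∉ S adjacent
  have key : ∃ s' ∈ S, ∃ u ∉ S, ((⊤ : SimpleGraph (Fin r)).boxProd (⊤ : SimpleGraph (Fin r))).Adj u s' := by
    by_cases ha : ((⊤ : SimpleGraph (Fin r)).boxProd (⊤ : SimpleGraph (Fin r))).Adj v s
    · exact ⟨s, hs, v, hv', ha⟩
    · have hne : v ≠ s := fun h => hv' (h ▸ hs)
      have h1 : v.1 ≠ s.1 ∧ v.2 ≠ s.2 := by
        rw [hg_adj] at ha; push_neg at ha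
        rcases eq_or_ne v.1 s.1 with h' | h'
        · exact absurd (Prod.ext h' (ha.1 h')) hne
        · exact ⟨h', fun h2 => h' (ha.2 h2)⟩
      by_cases hwS : (s.1, v.2) ∈ S
      · refine ⟨(s.1, v.2), hwS, v, hv', ?_⟩
        rw [hg_adj]; right; exact ⟨rfl, h1.1⟩
      · refine ⟨s, hs, (s.1, v.2), hwS, ?_⟩
        rw [hg_adj]; left; exact ⟨rfl, h1.2⟩
  obtain ⟨s', hs', u, hu, hadj⟩ := key
  have hsub : cls ((⊤ : SimpleGraph (Fin r)).boxProd (⊤ : SimpleGraph (Fin r))) S u ⊆ ↑(nbr s') := by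
    intro y hy
    obtain ⟨hyS, hyd⟩ := hy
    have := hyd s' hs'
    rw [dist_eq_one_iff_adj.mpr hadj] at this
    rw [Finset.mem_coe, mem_nbr]
    exact dist_eq_one_iff_adj.mp this.symm
  have hle : (cls ((⊤ : SimpleGraph (Fin r)).boxProd (⊤ : SimpleGraph (Fin r))) S u).ncard ≤ 2 * r - 2 := by
    have := Set.ncard_le_ncard hsub (Finset.finite_toSet _)
    rwa [Set.ncard_coe_finset, card_nbr] at this
  have := hS.2.2.1 u hu
  omega

/-- For `r ≥ 4`, the Hamming graph `K_r □ K_r` is `(2r−2)`-metric antidimensional and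
`adim_{2r−2}(K_r □ K_r) = 1`: every singleton is a `(2r−2)`-ARS, and no `k`-ARS exists
for `k > 2r−2`. -/
theorem stmt16 (r : ℕ) (hr : 4 ≤ r) :
    (∀ x : Fin r × Fin r,
      IsKARS ((⊤ : SimpleGraph (Fin r)).boxProd (⊤ : SimpleGraph (Fin r))) (2 * r - 2) {x}) ∧
    adim ((⊤ : SimpleGraph (Fin r)).boxProd (⊤ : SimpleGraph (Fin r))) (2 * r - 2) = 1 ∧
    ∀ k, 2 * r - 2 < k → ¬∃ S : Set (Fin r × Fin r),
      IsKARS ((⊤ : SimpleGraph (Fin r)).boxProd (⊤ : SimpleGraph (Fin r))) k S := by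
  refine ⟨singleton_KARS hr, ?_, no_big_KARS hr⟩
  apply le_antisymm
  · apply sInf_le
    exact ⟨{((⟨0, by omega⟩ : Fin r), (⟨0, by omega⟩ : Fin r))}, singleton_KARS hr _, by simp⟩
  · apply le_sInf
    rintro n ⟨S, hS, rfl⟩
    obtain ⟨x, hx⟩ := hS.1
    have h1 : 0 < S.ncard := by
      rw [Set.ncard_pos (Set.toFinite S)]
      exact ⟨x, hx⟩
    simpa using (Nat.one_le_cast (α := ℕ∞)).mpr h1
end

section
/- For r ≥ 4, adim_1(K_r □ K_r) = 3: the set {(u_1,v_1),(u_1,v_2),(u_2,v_1)} is a 1-ARS (the vertex (u_2,v_2) forms a singleton class), and no set of size at most 2 is a 1-ARS. -/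
open SimpleGraph

abbrev KK (r : ℕ) : SimpleGraph (Fin r × Fin r) :=
  (⊤ : SimpleGraph (Fin r)).boxProd (⊤ : SimpleGraph (Fin r))

lemma boxDist {r : ℕ} (x y : Fin r × Fin r) :
    (KK r).dist x y = (if x.1 = y.1 then 0 else 1) + (if x.2 = y.2 then 0 else 1) := by
  obtain ⟨a, b⟩ := x
  obtain ⟨c, d⟩ := y
  by_cases h1 : a = c <;> by_cases h2 : b = d
  · subst h1 h2; simp [SimpleGraph.dist_self]
  · subst h1
    simp only [if_pos rfl, if_true, if_neg h2, zero_add]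
    rw [SimpleGraph.dist_eq_one_iff_adj]
    exact (boxProd_adj_right).mpr (by simpa using h2)
  · subst h2
    simp only [if_pos rfl, if_true, if_neg h1, add_zero]
    rw [SimpleGraph.dist_eq_one_iff_adj]
    exact (boxProd_adj_left).mpr (by simpa using h1)
  · simp only [if_neg h1, if_neg h2]
    have adj1 : (KK r).Adj (a, b) (c, b) := by
      rw [boxProd_adj_left]; simpa using h1
    have adj2 : (KK r).Adj (c, b) (c, d) := by
      rw [boxProd_adj_right]; simpa using h2
    have hle : (KK r).dist (a, b) (c, d) ≤ 2 :=
      SimpleGraph.dist_le (Walk.cons adj1 (Walk.cons adj2 Walk.nil))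
    have hne : ((a, b) : Fin r × Fin r) ≠ (c, d) := by simp [Prod.ext_iff, h1]
    have hpos := (Walk.cons adj1 (Walk.cons adj2 Walk.nil)).reachable.pos_dist_of_ne hne
    have h1' : (KK r).dist (a, b) (c, d) ≠ 1 := fun h => by
      have := SimpleGraph.dist_eq_one_iff_adj.mp h
      rw [boxProd_adj] at this
      simp [h1, h2] at this
    omega

lemma exists_fresh {r : ℕ} (hr : 4 ≤ r) (u v w : Fin r) :
    ∃ z : Fin r, z ≠ u ∧ z ≠ v ∧ z ≠ w := by
  have hcard : ({u, v, w} : Finset (Fin r)).card ≤ 3 := by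
    apply le_trans (Finset.card_insert_le _ _)
    apply Nat.succ_le_succ
    exact le_trans (Finset.card_insert_le _ _) (by simp)
  have hns : ¬ (Finset.univ : Finset (Fin r)) ⊆ {u, v, w} := by
    intro hsub
    have := Finset.card_le_card hsub
    simp only [Finset.card_univ, Fintype.card_fin] at this
    omega
  rw [Finset.not_subset] at hns
  obtain ⟨z, -, hz⟩ := hns
  simp only [Finset.mem_insert, Finset.mem_singleton, not_or] at hz
  exact ⟨z, hz.1, hz.2.1, hz.2.2⟩

lemma key_lemma {r : ℕ} (hr : 4 ≤ r) (S : Set (Fin r × Fin r)) (s t : Fin r × Fin r)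
    (hs : s ∈ S) (ht : t ∈ S) (hsub : S ⊆ {s, t}) (x : Fin r × Fin r) (hx : x ∉ S) :
    ∃ y, y ≠ x ∧ y ∈ cls (KK r) S x := by
  obtain ⟨a, b⟩ := x
  obtain ⟨s1, s2⟩ := s
  obtain ⟨t1, t2⟩ := t
  by_cases ha : a = s1 ∨ a = t1
  · by_cases hb : b = s2 ∨ b = t2
    · have hxs : ((a, b) : Fin r × Fin r) ≠ (s1, s2) := fun h => hx (by rw [h]; exact hs)
      have hxt : ((a, b) : Fin r × Fin r) ≠ (t1, t2) := fun h => hx (by rw [h]; exact ht)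
      rcases ha with rfl | rfl <;> rcases hb with rfl | rfl
      · exact absurd rfl hxs
      · -- s = (a, s2), t = (t1, b), x = (a, b)
        have h1 : a ≠ t1 := fun h => hxt (by rw [h])
        have h2 : b ≠ s2 := fun h => hxs (by rw [h])
        refine ⟨(t1, s2), ?_, ?_, ?_⟩
        · intro h
          exact h1 (congrArg Prod.fst h).symm
        · intro hmem
          have := hsub hmem
          rw [Set.mem_insert_iff, Set.mem_singleton_iff] at this
          rcases this with h | h
          · exact h1 (congrArg Prod.fst h).symm
          · exact h2 (congrArg Prod.snd h).symm
        · intro z hz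
          have := hsub hz
          rw [Set.mem_insert_iff, Set.mem_singleton_iff] at this
          rcases this with rfl | rfl <;>
            simp [boxDist, h1, h2, Ne.symm h1, Ne.symm h2]
      · -- s = (s1, b), t = (a, t2), x = (a, b)
        have h1 : a ≠ s1 := fun h => hxs (by rw [h])
        have h2 : b ≠ t2 := fun h => hxt (by rw [h])
        refine ⟨(s1, t2), ?_, ?_, ?_⟩
        · intro h
          exact h1 (congrArg Prod.fst h).symm
        · intro hmem
          have := hsub hmem
          rw [Set.mem_insert_iff, Set.mem_singleton_iff] at this
          rcases this with h | h
          · exact h2 (congrArg Prod.snd h).symm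
          · exact h1 (congrArg Prod.fst h).symm
        · intro z hz
          have := hsub hz
          rw [Set.mem_insert_iff, Set.mem_singleton_iff] at this
          rcases this with rfl | rfl <;>
            simp [boxDist, h1, h2, Ne.symm h1, Ne.symm h2]
      · exact absurd rfl hxt
    · push_neg at hb
      obtain ⟨hb1, hb2⟩ := hb
      obtain ⟨b', h1, h2, h3⟩ := exists_fresh hr s2 t2 b
      refine ⟨(a, b'), ?_, ?_, ?_⟩
      · intro h
        exact h3 (congrArg Prod.snd h)
      · intro hmem
        have := hsub hmem
        rw [Set.mem_insert_iff, Set.mem_singleton_iff] at this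
        rcases this with h | h
        · exact h1 (congrArg Prod.snd h)
        · exact h2 (congrArg Prod.snd h)
      · intro z hz
        have := hsub hz
        rw [Set.mem_insert_iff, Set.mem_singleton_iff] at this
        rcases this with rfl | rfl <;> simp [boxDist, hb1, hb2, h1, h2]
  · push_neg at ha
    obtain ⟨ha1, ha2⟩ := ha
    obtain ⟨a', h1, h2, h3⟩ := exists_fresh hr s1 t1 a
    refine ⟨(a', b), ?_, ?_, ?_⟩
    · intro h
      exact h3 (congrArg Prod.fst h)
    · intro hmem
      have := hsub hmem
      rw [Set.mem_insert_iff, Set.mem_singleton_iff] at this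
      rcases this with h | h
      · exact h1 (congrArg Prod.fst h)
      · exact h2 (congrArg Prod.fst h)
    · intro z hz
      have := hsub hz
      rw [Set.mem_insert_iff, Set.mem_singleton_iff] at this
      rcases this with rfl | rfl <;> simp [boxDist, ha1, ha2, h1, h2]

lemma no_small {r : ℕ} (hr : 4 ≤ r) (S : Set (Fin r × Fin r)) (h2 : S.ncard ≤ 2) :
    ¬ IsKARS (KK r) 1 S := by
  rintro ⟨hne, -, -, x, hx, hcard⟩
  have hpos : 0 < S.ncard := (Set.ncard_pos (Set.toFinite S)).mpr hne
  have hst : ∃ s t, s ∈ S ∧ t ∈ S ∧ S ⊆ {s, t} := by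
    interval_cases h : S.ncard
    · obtain ⟨s, rfl⟩ := Set.ncard_eq_one.mp h
      exact ⟨s, s, rfl, rfl, by simp⟩
    · obtain ⟨s, t, -, rfl⟩ := Set.ncard_eq_two.mp h
      exact ⟨s, t, by simp, by simp, le_refl _⟩
  obtain ⟨s, t, hs, ht, hsub⟩ := hst
  obtain ⟨y, hyx, hy⟩ := key_lemma hr S s t hs ht hsub x hx
  have hxmem : x ∈ cls (KK r) S x := ⟨hx, fun z _ => rfl⟩
  have : 1 < (cls (KK r) S x).ncard :=
    (Set.one_lt_ncard (Set.toFinite _)).mpr ⟨x, hxmem, y, hy, Ne.symm hyx⟩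
  omega

lemma cls_eq {r : ℕ} (e0 e1 : Fin r) (h : e0 ≠ e1) :
    cls (KK r) {(e0, e0), (e0, e1), (e1, e0)} (e1, e1) = {(e1, e1)} := by
  have h' := Ne.symm h
  ext ⟨a, b⟩
  constructor
  · rintro ⟨-, hd⟩
    have h1 := hd (e0, e0) (by simp)
    have h2 := hd (e0, e1) (by simp)
    have h3 := hd (e1, e0) (by simp)
    simp only [boxDist, if_neg h', if_pos rfl, if_true] at h1 h2 h3
    simp only [Set.mem_singleton_iff, Prod.mk.injEq]
    split_ifs at h1 h2 h3 <;> omega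
  · intro hmem
    rw [Set.mem_singleton_iff] at hmem
    rw [hmem]
    refine ⟨?_, fun z _ => rfl⟩
    simp only [Set.mem_insert_iff, Set.mem_singleton_iff, Prod.mk.injEq, not_or]
    exact ⟨fun hh => h' hh.1, fun hh => h' hh.1, fun hh => h' hh.2⟩

lemma card3 {r : ℕ} (e0 e1 : Fin r) (h : e0 ≠ e1) :
    ({(e0, e0), (e0, e1), (e1, e0)} : Set (Fin r × Fin r)).ncard = 3 := by
  rw [Set.ncard_eq_three]
  refine ⟨_, _, _, ?_, ?_, ?_, rfl⟩ <;> simp [Prod.ext_iff, h, Ne.symm h]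

lemma is_kars {r : ℕ} (e0 e1 : Fin r) (h : e0 ≠ e1) :
    IsKARS (KK r) 1 {(e0, e0), (e0, e1), (e1, e0)} := by
  have h' := Ne.symm h
  have hmem : ((e1, e1) : Fin r × Fin r) ∉ ({(e0, e0), (e0, e1), (e1, e0)} : Set _) := by
    simp only [Set.mem_insert_iff, Set.mem_singleton_iff, Prod.mk.injEq, not_or]
    exact ⟨fun hh => h' hh.1, fun hh => h' hh.1, fun hh => h' hh.2⟩
  refine ⟨⟨(e0, e0), by simp⟩, ⟨(e1, e1), hmem⟩, ?_, (e1, e1), hmem, ?_⟩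
  · intro x hx
    exact (Set.ncard_pos (Set.toFinite _)).mpr ⟨x, hx, fun z _ => rfl⟩
  · rw [cls_eq e0 e1 h]
    exact Set.ncard_singleton _

/-- For `r ≥ 4`, `adim_1(K_r □ K_r) = 3`: the set `{(u_1,v_1), (u_1,v_2), (u_2,v_1)}`
is a 1-ARS (the vertex `(u_2,v_2)` forms a singleton class), and no set of size at most
2 is a 1-ARS. -/
theorem stmt17 (r : ℕ) (hr : 4 ≤ r) :
    adim ((⊤ : SimpleGraph (Fin r)).boxProd (⊤ : SimpleGraph (Fin r))) 1 = 3 ∧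
    IsKARS ((⊤ : SimpleGraph (Fin r)).boxProd (⊤ : SimpleGraph (Fin r))) 1
      ({(⟨0, by omega⟩, ⟨0, by omega⟩), (⟨0, by omega⟩, ⟨1, by omega⟩),
        (⟨1, by omega⟩, ⟨0, by omega⟩)} : Set (Fin r × Fin r)) ∧
    cls ((⊤ : SimpleGraph (Fin r)).boxProd (⊤ : SimpleGraph (Fin r)))
      ({(⟨0, by omega⟩, ⟨0, by omega⟩), (⟨0, by omega⟩, ⟨1, by omega⟩),
        (⟨1, by omega⟩, ⟨0, by omega⟩)} : Set (Fin r × Fin r))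
      ((⟨1, by omega⟩, ⟨1, by omega⟩)) = {(⟨1, by omega⟩, ⟨1, by omega⟩)} ∧
    ∀ S : Set (Fin r × Fin r), S.ncard ≤ 2 →
      ¬ IsKARS ((⊤ : SimpleGraph (Fin r)).boxProd (⊤ : SimpleGraph (Fin r))) 1 S := by
  have h01 : (⟨0, by omega⟩ : Fin r) ≠ ⟨1, by omega⟩ := by
    simp [Fin.ext_iff]
  have hK := is_kars (r := r) ⟨0, by omega⟩ ⟨1, by omega⟩ h01
  refine ⟨?_, hK, cls_eq _ _ h01, fun S h2 => no_small hr S h2⟩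
  apply le_antisymm
  · apply sInf_le
    refine ⟨_, hK, ?_⟩
    show ((Set.ncard _ : ℕ) : ℕ∞) = 3
    rw [card3 _ _ h01]
    rfl
  · apply le_sInf
    rintro n ⟨S, hS, rfl⟩
    have h3 : 3 ≤ S.ncard := by
      by_contra hcon
      push_neg at hcon
      exact no_small hr S (by omega) hS
    show (3 : ℕ∞) ≤ ((S.ncard : ℕ) : ℕ∞)
    exact_mod_cast h3
end

section
/- For r ≥ 5 and 3 ≤ k ≤ r−2, adim_k(K_r □ K_r) = r−k; for k = r−1, adim_{r−1}(K_r □ K_r) = r; and for r ≤ k ≤ 2r−3 there is no k-ARS in K_r □ K_r (adim_k = +∞). In particular, any set X of t vertices contained in a single column V(K_r) × {v_j} with 2 ≤ t ≤ r−1 is an (r−t)-ARS. -/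
open SimpleGraph

namespace Stmt19Aux

open Set

abbrev Gr (r : ℕ) : SimpleGraph (Fin r × Fin r) :=
  (⊤ : SimpleGraph (Fin r)).boxProd (⊤ : SimpleGraph (Fin r))

def share {r : ℕ} (x z : Fin r × Fin r) : Prop := x.1 = z.1 ∨ x.2 = z.2

variable {r : ℕ}

lemma dist_Gr (x y : Fin r × Fin r) :
    (Gr r).dist x y = (if x.1 = y.1 then 0 else 1) + (if x.2 = y.2 then 0 else 1) := by
  obtain ⟨a, b⟩ := x; obtain ⟨c, d⟩ := y
  by_cases h1 : a = c <;> by_cases h2 : b = d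
  · subst h1; subst h2; simp
  · subst h1
    have : (Gr r).Adj (a, b) (a, d) := boxProd_adj_right.mpr (by simpa using h2)
    simp only [if_pos rfl, if_neg h2]
    simpa using dist_eq_one_iff_adj.mpr this
  · subst h2
    have : (Gr r).Adj (a, b) (c, b) := boxProd_adj_left.mpr (by simpa using h1)
    simp only [if_neg h1, if_pos rfl]
    simpa using dist_eq_one_iff_adj.mpr this
  · have hadj1 : (Gr r).Adj (a, b) (c, b) := boxProd_adj_left.mpr (by simpa using h1)
    have hadj2 : (Gr r).Adj (c, b) (c, d) := boxProd_adj_right.mpr (by simpa using h2)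
    let w : (Gr r).Walk (a, b) (c, d) := hadj1.toWalk.append hadj2.toWalk
    have hle : (Gr r).dist (a, b) (c, d) ≤ 2 := by
      simpa [w] using SimpleGraph.dist_le w
    have hne : ((a, b) : Fin r × Fin r) ≠ (c, d) := by
      simp only [ne_eq, Prod.mk.injEq, not_and]; exact fun h => absurd h h1
    have h0 : (Gr r).dist (a, b) (c, d) ≠ 0 :=
      fun h => hne ((Reachable.dist_eq_zero_iff ⟨w⟩).mp h)
    have hnadj : ¬(Gr r).Adj (a, b) (c, d) := by
      simp [boxProd_adj, h1, h2]
    have h1' : (Gr r).dist (a, b) (c, d) ≠ 1 :=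
      fun h => hnadj (dist_eq_one_iff_adj.mp h)
    simp only [if_neg h1, if_neg h2]
    omega

lemma sameDists_iff {S : Set (Fin r × Fin r)} {x y : Fin r × Fin r}
    (hx : x ∉ S) (hy : y ∉ S) :
    sameDists (Gr r) S x y ↔ ∀ z ∈ S, (share x z ↔ share y z) := by
  unfold sameDists
  refine forall₂_congr fun z hz => ?_
  have hxz : ¬(x.1 = z.1 ∧ x.2 = z.2) := by
    rintro ⟨h1, h2⟩; exact hx ((Prod.ext h1 h2) ▸ hz)
  have hyz : ¬(y.1 = z.1 ∧ y.2 = z.2) := by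
    rintro ⟨h1, h2⟩; exact hy ((Prod.ext h1 h2) ▸ hz)
  rw [dist_Gr, dist_Gr]
  unfold share
  by_cases p1 : x.1 = z.1 <;> by_cases p2 : x.2 = z.2 <;>
    by_cases q1 : y.1 = z.1 <;> by_cases q2 : y.2 = z.2 <;>
    simp [p1, p2, q1, q2] <;> tauto


def mycls (S : Set (Fin r × Fin r)) (x : Fin r × Fin r) : Set (Fin r × Fin r) :=
  {y | y ∉ S ∧ ∀ z ∈ S, (share x z ↔ share y z)}

lemma cls_eq {S : Set (Fin r × Fin r)} {x : Fin r × Fin r} (hx : x ∉ S) :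
    cls (Gr r) S x = mycls S x := by
  ext y
  simp only [cls, mycls, mem_setOf_eq]
  exact and_congr_right fun hy => sameDists_iff hx hy

lemma isKARS_iff (k : ℕ) (S : Set (Fin r × Fin r)) :
    IsKARS (Gr r) k S ↔ S.Nonempty ∧ Sᶜ.Nonempty ∧
      (∀ x ∉ S, k ≤ (mycls S x).ncard) ∧ ∃ x ∉ S, (mycls S x).ncard = k := by
  unfold IsKARS
  refine and_congr_right fun _ => and_congr_right fun _ => ?_
  constructor
  · rintro ⟨h3, x, hx, hxk⟩
    exact ⟨fun y hy => (cls_eq hy) ▸ h3 y hy, x, hx, (cls_eq hx) ▸ hxk⟩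
  · rintro ⟨h3, x, hx, hxk⟩
    exact ⟨fun y hy => (cls_eq hy) ▸ h3 y hy, x, hx, (cls_eq hx) ▸ hxk⟩

lemma ncard_sprod {α β : Type*} (s : Set α) (t : Set β) :
    (s ×ˢ t).ncard = s.ncard * t.ncard := by
  rw [← Nat.card_coe_set_eq, ← Nat.card_coe_set_eq, ← Nat.card_coe_set_eq, ← Nat.card_prod]
  exact Nat.card_congr (Equiv.Set.prod s t)

lemma ncard_compl_fin (s : Set (Fin r)) : sᶜ.ncard = r - s.ncard := by
  have := Set.ncard_add_ncard_compl s
  rw [Nat.card_eq_fintype_card, Fintype.card_fin] at this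
  omega

lemma ncard_le_r (s : Set (Fin r)) : s.ncard ≤ r := by
  have := Set.ncard_le_ncard (subset_univ s) (toFinite _)
  rwa [ncard_univ, Nat.card_eq_fintype_card, Fintype.card_fin] at this

variable {A B : Set (Fin r)}

lemma clsP1 {a b : Fin r} (ha : a ∈ A) (hb : b ∉ B) (hB : B.Nonempty)
    (hpq : 2 ≤ A.ncard ∨ 2 ≤ B.ncard) :
    mycls (A ×ˢ B) (a, b) = {a} ×ˢ Bᶜ := by
  ext ⟨y1, y2⟩
  simp only [mycls, mem_setOf_eq, mem_prod, mem_singleton_iff, mem_compl_iff, share]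
  constructor
  · rintro ⟨hyS, hsh⟩
    obtain ⟨b₀, hb₀⟩ := hB
    have hy1 : y1 = a := by
      by_contra hne
      have h1 := (hsh (a, b₀) ⟨ha, hb₀⟩).mp (Or.inl rfl)
      have hy2 : y2 = b₀ := h1.resolve_left hne
      rcases hpq with hp | hq
      · obtain ⟨a', ha', hne'⟩ := Set.exists_ne_of_one_lt_ncard (s := A) (by omega) a
        have h2 := (hsh (a', b₀) ⟨ha', hb₀⟩).mpr (Or.inr hy2)
        rcases h2 with h | h
        · exact hne' h.symm
        · exact hb (h ▸ hb₀)
      · obtain ⟨b₁, hb₁, hne₁⟩ := Set.exists_ne_of_one_lt_ncard (s := B) (by omega) b₀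
        have h3 := (hsh (a, b₁) ⟨ha, hb₁⟩).mp (Or.inl rfl)
        rcases h3 with h | h
        · exact hne h
        · exact hne₁ (h.symm.trans hy2)
    subst hy1
    exact ⟨rfl, fun hy2B => hyS ⟨ha, hy2B⟩⟩
  · rintro ⟨rfl, hy2⟩
    refine ⟨fun h => hy2 h.2, fun z hz => ?_⟩
    constructor
    · rintro (h | h)
      · exact Or.inl h
      · exact absurd (h ▸ hz.2) hb
    · rintro (h | h)
      · exact Or.inl h
      · exact absurd (h ▸ hz.2) hy2

lemma clsP2 {a b : Fin r} (ha : a ∉ A) (hb : b ∈ B) (hA : A.Nonempty)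
    (hpq : 2 ≤ A.ncard ∨ 2 ≤ B.ncard) :
    mycls (A ×ˢ B) (a, b) = Aᶜ ×ˢ {b} := by
  ext ⟨y1, y2⟩
  simp only [mycls, mem_setOf_eq, mem_prod, mem_singleton_iff, mem_compl_iff, share]
  constructor
  · rintro ⟨hyS, hsh⟩
    obtain ⟨a₀, ha₀⟩ := hA
    have hy2 : y2 = b := by
      by_contra hne
      have h1 := (hsh (a₀, b) ⟨ha₀, hb⟩).mp (Or.inr rfl)
      have hy1 : y1 = a₀ := h1.resolve_right hne
      rcases hpq with hp | hq
      · obtain ⟨a₁, ha₁, hne₁⟩ := Set.exists_ne_of_one_lt_ncard (s := A) (by omega) a₀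
        have h3 := (hsh (a₁, b) ⟨ha₁, hb⟩).mp (Or.inr rfl)
        rcases h3 with h | h
        · exact hne₁ (h.symm.trans hy1)
        · exact hne h
      · obtain ⟨b', hb', hne'⟩ := Set.exists_ne_of_one_lt_ncard (s := B) (by omega) b
        have h2 := (hsh (a₀, b') ⟨ha₀, hb'⟩).mpr (Or.inl hy1)
        rcases h2 with h | h
        · exact ha (h ▸ ha₀)
        · exact hne' h.symm
    subst hy2
    exact ⟨fun hy1A => hyS ⟨hy1A, hb⟩, rfl⟩
  · rintro ⟨hy1, rfl⟩
    refine ⟨fun h => hy1 h.1, fun z hz => ?_⟩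
    constructor
    · rintro (h | h)
      · exact absurd (h ▸ hz.1) ha
      · exact Or.inr h
    · rintro (h | h)
      · exact absurd (h ▸ hz.1) hy1
      · exact Or.inr h

lemma clsP3 {a b : Fin r} (ha : a ∉ A) (hb : b ∉ B) (hA : A.Nonempty) (hB : B.Nonempty) :
    mycls (A ×ˢ B) (a, b) = Aᶜ ×ˢ Bᶜ := by
  obtain ⟨a₀, ha₀⟩ := hA
  obtain ⟨b₀, hb₀⟩ := hB
  ext ⟨y1, y2⟩
  simp only [mycls, mem_setOf_eq, mem_prod, mem_compl_iff, share]
  constructor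
  · rintro ⟨hyS, hsh⟩
    constructor
    · intro hy1
      have := (hsh (y1, b₀) ⟨hy1, hb₀⟩).mpr (Or.inl rfl)
      rcases this with h | h
      · exact ha (h ▸ hy1)
      · exact hb (h ▸ hb₀)
    · intro hy2
      have := (hsh (a₀, y2) ⟨ha₀, hy2⟩).mpr (Or.inr rfl)
      rcases this with h | h
      · exact ha (h ▸ ha₀)
      · exact hb (h ▸ hy2)
  · rintro ⟨hy1, hy2⟩
    refine ⟨fun h => hy1 h.1, fun z hz => ?_⟩
    constructor
    · rintro (h | h)
      · exact absurd (h ▸ hz.1) ha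
      · exact absurd (h ▸ hz.2) hb
    · rintro (h | h)
      · exact absurd (h ▸ hz.1) hy1
      · exact absurd (h ▸ hz.2) hy2

lemma clsP4 {z₀ x : Fin r × Fin r} (hx : x ≠ z₀) (hsh : share x z₀) :
    mycls {z₀} x = {y | y ≠ z₀ ∧ share y z₀} := by
  ext y
  simp only [mycls, mem_setOf_eq, mem_singleton_iff, forall_eq]
  constructor
  · rintro ⟨hy, h⟩
    exact ⟨hy, h.mp hsh⟩
  · rintro ⟨hy, h⟩
    exact ⟨hy, iff_of_true hsh h⟩

lemma crossCard (hr : 1 ≤ r) (z₀ : Fin r × Fin r) :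
    {y : Fin r × Fin r | y ≠ z₀ ∧ share y z₀}.ncard = 2 * r - 2 := by
  obtain ⟨a₀, b₀⟩ := z₀
  have hset : {y : Fin r × Fin r | y ≠ (a₀, b₀) ∧ share y (a₀, b₀)} =
      ({a₀} ×ˢ {b₀}ᶜ) ∪ ({a₀}ᶜ ×ˢ {b₀}) := by
    ext ⟨y1, y2⟩
    simp only [mem_setOf_eq, share, mem_union, mem_prod, mem_singleton_iff, mem_compl_iff,
      ne_eq, Prod.mk.injEq, not_and]
    constructor
    · rintro ⟨hne, h | h⟩
      · exact Or.inl ⟨h, fun h2 => hne h h2⟩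
      · by_cases h1 : y1 = a₀
        · exact Or.inl ⟨h1, fun h2 => hne h1 h2⟩
        · exact Or.inr ⟨h1, h⟩
    · rintro (⟨h1, h2⟩ | ⟨h1, h2⟩)
      · exact ⟨fun _ hb => h2 hb, Or.inl h1⟩
      · exact ⟨fun ha _ => h1 ha, Or.inr h2⟩
  rw [hset, Set.ncard_union_eq ?_ (toFinite _) (toFinite _)]
  · rw [ncard_sprod, ncard_sprod, ncard_compl_fin, ncard_compl_fin]
    simp only [Set.ncard_singleton]
    omega
  · rw [Set.disjoint_left]
    rintro ⟨y1, y2⟩ hy hy'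
    simp only [mem_prod, mem_singleton_iff, mem_compl_iff] at hy hy'
    exact hy'.1 hy.1

lemma cross_small {S : Set (Fin r × Fin r)} {z w : Fin r × Fin r}
    (hz : z ∈ S) (hw : w ∈ S) (h1 : z.1 ≠ w.1) (h2 : z.2 ≠ w.2) :
    (mycls S (z.1, w.2)).ncard ≤ 2 := by
  have hsub : mycls S (z.1, w.2) ⊆ {(z.1, w.2), (w.1, z.2)} := by
    rintro ⟨y1, y2⟩ ⟨hyS, hsh⟩
    have hz' := (hsh z hz).mp (Or.inl rfl)
    have hw' := (hsh w hw).mp (Or.inr rfl)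
    rcases hz' with h | h <;> rcases hw' with h' | h'
    · exact absurd (h.symm.trans h') h1
    · exact Or.inl (Prod.ext h h')
    · exact Or.inr (Prod.ext h' h)
    · exact absurd (h.symm.trans h') h2
  calc (mycls S (z.1, w.2)).ncard ≤ ({(z.1, w.2), (w.1, z.2)} : Set (Fin r × Fin r)).ncard :=
        Set.ncard_le_ncard hsub (toFinite _)
    _ ≤ 2 := by
        rw [Set.ncard_pair (by simp only [ne_eq, Prod.mk.injEq, not_and]; exact fun h => absurd h h1)]

lemma prod_structure {S : Set (Fin r × Fin r)} {m : ℕ} (hm : 3 ≤ m)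
    (hmin : ∀ x ∉ S, m ≤ (mycls S x).ncard) :
    S = (Prod.fst '' S) ×ˢ (Prod.snd '' S) := by
  ext ⟨a, d⟩
  simp only [mem_prod, mem_image, Prod.exists, exists_and_right, exists_eq_right]
  constructor
  · intro h
    exact ⟨⟨d, h⟩, ⟨a, h⟩⟩
  · rintro ⟨⟨b, hzb⟩, ⟨c, hcw⟩⟩
    -- (a, b) ∈ S, (c, d) ∈ S
    by_cases hac : a = c
    · subst hac; exact hcw
    · by_cases hbd : b = d
      · subst hbd; exact hzb
      · by_contra hu
        have hsmall : (mycls S (a, d)).ncard ≤ 2 := cross_small hzb hcw hac hbd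
        have := hmin (a, d) hu
        omega

lemma cardP1 {a : Fin r} (B : Set (Fin r)) : (({a} ×ˢ Bᶜ) : Set (Fin r × Fin r)).ncard = r - B.ncard := by
  rw [ncard_sprod, Set.ncard_singleton, ncard_compl_fin, one_mul]

lemma cardP2 {b : Fin r} (A : Set (Fin r)) : ((Aᶜ ×ˢ {b}) : Set (Fin r × Fin r)).ncard = r - A.ncard := by
  rw [ncard_sprod, Set.ncard_singleton, ncard_compl_fin, mul_one]

lemma cardP3 (A B : Set (Fin r)) :
    ((Aᶜ ×ˢ Bᶜ) : Set (Fin r × Fin r)).ncard = (r - A.ncard) * (r - B.ncard) := by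
  rw [ncard_sprod, ncard_compl_fin, ncard_compl_fin]

lemma compl_nonempty {s : Set (Fin r)} (h : s.ncard < r) : sᶜ.Nonempty := by
  apply Set.nonempty_of_ncard_ne_zero
  rw [ncard_compl_fin]
  omega

lemma key (hr : 5 ≤ r) {S : Set (Fin r × Fin r)} {m : ℕ} (hm : 3 ≤ m)
    (hS : S.Nonempty) (hmin : ∀ x ∉ S, m ≤ (mycls S x).ncard)
    {x₀ : Fin r × Fin r} (hx₀ : x₀ ∉ S) (hx₀m : (mycls S x₀).ncard = m) :
    r - m ≤ S.ncard ∧ (m = r - 1 → r ≤ S.ncard) ∧ (m ≤ r - 1 ∨ 2 * r - 2 ≤ m) := by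
  have hprod := prod_structure hm hmin
  set A := Prod.fst '' S with hA
  set B := Prod.snd '' S with hB
  rw [hprod] at hmin hx₀ hx₀m ⊢
  have hAne : A.Nonempty := hS.image _
  have hBne : B.Nonempty := hS.image _
  have hp1 : 1 ≤ A.ncard := (Set.ncard_pos (toFinite _)).mpr hAne
  have hq1 : 1 ≤ B.ncard := (Set.ncard_pos (toFinite _)).mpr hBne
  have hpr : A.ncard ≤ r := ncard_le_r A
  have hqr : B.ncard ≤ r := ncard_le_r B
  rw [ncard_sprod]
  obtain ⟨a, b⟩ := x₀
  have hx₀' : ¬(a ∈ A ∧ b ∈ B) := by simpa [mem_prod] using hx₀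
  by_cases hpq : 2 ≤ A.ncard ∨ 2 ≤ B.ncard
  · by_cases ha : a ∈ A
    · -- type P1 : m = r - q
      have hb : b ∉ B := fun h => hx₀' ⟨ha, h⟩
      rw [clsP1 ha hb hBne hpq, cardP1] at hx₀m
      have hqle : B.ncard ≤ A.ncard * B.ncard := Nat.le_mul_of_pos_left _ (by omega)
      refine ⟨by omega, ?_, Or.inl (by omega)⟩
      intro hm'
      have hq : B.ncard = 1 := by omega
      have hp2 : 2 ≤ A.ncard := by rcases hpq with h | h; exact h; omega
      -- show A.ncard = r
      by_contra hcon
      have hmulq : A.ncard * B.ncard = A.ncard := by rw [hq, mul_one]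
      have hpltr : A.ncard < r := by omega
      obtain ⟨a', ha'⟩ := compl_nonempty hpltr
      obtain ⟨b₀, hb₀⟩ := hBne
      have hu : (a', b₀) ∉ A ×ˢ B := by
        simp only [mem_prod, not_and]
        intro h; exact absurd h ha'
      have := hmin (a', b₀) hu
      rw [clsP2 ha' hb₀ hAne hpq, cardP2] at this
      omega
    · by_cases hbB : b ∈ B
      · -- type P2 : m = r - p
        rw [clsP2 ha hbB hAne hpq, cardP2] at hx₀m
        have hple : A.ncard ≤ A.ncard * B.ncard := Nat.le_mul_of_pos_right _ (by omega)
        refine ⟨by omega, ?_, Or.inl (by omega)⟩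
        intro hm'
        have hp : A.ncard = 1 := by omega
        have hq2 : 2 ≤ B.ncard := by rcases hpq with h | h; omega; exact h
        by_contra hcon
        have hmulp : A.ncard * B.ncard = B.ncard := by rw [hp, one_mul]
        have hqltr : B.ncard < r := by omega
        obtain ⟨b', hb'⟩ := compl_nonempty hqltr
        obtain ⟨a₀, ha₀⟩ := hAne
        have hu : (a₀, b') ∉ A ×ˢ B := by
          simp only [mem_prod, not_and]
          intro _ h; exact absurd h hb'
        have := hmin (a₀, b') hu
        rw [clsP1 ha₀ hb' hBne hpq, cardP1] at this
        omega
      · -- type P3 : m = (r-p)(r-q), contradiction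
        exfalso
        rw [clsP3 ha hbB hAne hBne, cardP3] at hx₀m
        obtain ⟨a₀, ha₀⟩ := id hAne
        obtain ⟨b₀, hb₀⟩ := id hBne
        have hu1 : (a₀, b) ∉ A ×ˢ B := by
          simp only [mem_prod, not_and]; intro _ h; exact absurd h hbB
        have hle1 := hmin (a₀, b) hu1
        rw [clsP1 ha₀ hbB hBne hpq, cardP1] at hle1
        have hu2 : (a, b₀) ∉ A ×ˢ B := by
          simp only [mem_prod, not_and]; intro h; exact absurd h ha
        have hle2 := hmin (a, b₀) hu2
        rw [clsP2 ha hb₀ hAne hpq, cardP2] at hle2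
        -- m = (r-p)*(r-q), m ≤ r-p, m ≤ r-q, 3 ≤ m
        have h3p : 3 ≤ r - A.ncard := le_trans hm hle2
        have hmul : 3 * (r - B.ncard) ≤ (r - A.ncard) * (r - B.ncard) :=
          Nat.mul_le_mul_right _ h3p
        omega
  · -- singleton case
    push_neg at hpq
    have hp : A.ncard = 1 := by omega
    have hq : B.ncard = 1 := by omega
    obtain ⟨a₀, hA₀⟩ := Set.ncard_eq_one.mp hp
    obtain ⟨b₀, hB₀⟩ := Set.ncard_eq_one.mp hq
    rw [hA₀, hB₀, Set.singleton_prod_singleton] at hmin hx₀m hx₀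
    have hxne : ((a, b) : Fin r × Fin r) ≠ (a₀, b₀) := fun h => hx₀ (h ▸ rfl)
    by_cases hsh : a = a₀ ∨ b = b₀
    · rw [clsP4 hxne hsh, crossCard (by omega)] at hx₀m
      exact ⟨by omega, by omega, Or.inr (by omega)⟩
    · exfalso
      push_neg at hsh
      have hcls : mycls ({(a₀, b₀)} : Set (Fin r × Fin r)) (a, b) = ({a₀}ᶜ ×ˢ {b₀}ᶜ : Set (Fin r × Fin r)) := by
        rw [← Set.singleton_prod_singleton]
        exact clsP3 (by simpa using hsh.1) (by simpa using hsh.2) ⟨a₀, rfl⟩ ⟨b₀, rfl⟩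
      rw [hcls, cardP3] at hx₀m
      simp only [Set.ncard_singleton] at hx₀m
      have hune : ((a₀, b) : Fin r × Fin r) ≠ (a₀, b₀) := by
        simp only [ne_eq, Prod.mk.injEq]; exact fun h => hsh.2 h.2
      have := hmin (a₀, b) hune
      rw [clsP4 hune (Or.inl rfl), crossCard (by omega)] at this
      have h4 : 4 * (r - 1) ≤ (r - 1) * (r - 1) := Nat.mul_le_mul_right _ (by omega)
      omega

lemma karsCol (hr : 5 ≤ r) {A : Set (Fin r)} (j : Fin r) (h2 : 2 ≤ A.ncard)
    (h1 : A.ncard ≤ r - 1) :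
    IsKARS (Gr r) (r - A.ncard) (A ×ˢ ({j} : Set (Fin r))) := by
  have hAne : A.Nonempty := Set.nonempty_of_ncard_ne_zero (by omega)
  have hAc : Aᶜ.Nonempty := compl_nonempty (by omega)
  obtain ⟨a', ha'⟩ := hAc
  have hpq : 2 ≤ A.ncard ∨ 2 ≤ ({j} : Set (Fin r)).ncard := Or.inl h2
  rw [isKARS_iff]
  refine ⟨?_, ?_, ?_, ?_⟩
  · obtain ⟨a₀, ha₀⟩ := hAne; exact ⟨(a₀, j), ⟨ha₀, rfl⟩⟩
  · exact ⟨(a', j), fun h => ha' h.1⟩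
  · rintro ⟨x1, x2⟩ hx
    have hx' : ¬(x1 ∈ A ∧ x2 ∈ ({j} : Set (Fin r))) := fun h => hx ⟨h.1, h.2⟩
    by_cases hx2 : x2 = j
    · have hx1 : x1 ∉ A := fun h => hx' ⟨h, hx2⟩
      subst hx2
      rw [clsP2 (B := ({x2} : Set (Fin r))) hx1 (Set.mem_singleton x2) hAne hpq, cardP2]
    · by_cases hx1 : x1 ∈ A
      · rw [clsP1 (B := ({j} : Set (Fin r))) hx1 hx2 (Set.singleton_nonempty j) hpq, cardP1,
          Set.ncard_singleton]
        omega
      · rw [clsP3 (B := ({j} : Set (Fin r))) hx1 hx2 hAne (Set.singleton_nonempty j), cardP3,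
          Set.ncard_singleton]
        have := Nat.le_mul_of_pos_right (r - A.ncard) (show 0 < r - 1 by omega)
        omega
  · refine ⟨(a', j), fun h => ha' h.1, ?_⟩
    rw [clsP2 (B := ({j} : Set (Fin r))) ha' (Set.mem_singleton j) hAne hpq, cardP2]

lemma karsFull (hr : 5 ≤ r) (j : Fin r) :
    IsKARS (Gr r) (r - 1) ((univ : Set (Fin r)) ×ˢ ({j} : Set (Fin r))) := by
  have hcu : (univ : Set (Fin r)).ncard = r := by
    rw [ncard_univ, Nat.card_eq_fintype_card, Fintype.card_fin]
  have hpq : 2 ≤ (univ : Set (Fin r)).ncard ∨ 2 ≤ ({j} : Set (Fin r)).ncard :=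
    Or.inl (by omega)
  obtain ⟨b, hb⟩ := Fintype.exists_ne_of_one_lt_card (by rw [Fintype.card_fin]; omega) j
  have ha0 : (⟨0, by omega⟩ : Fin r) ∈ (univ : Set (Fin r)) := trivial
  rw [isKARS_iff]
  refine ⟨⟨(⟨0, by omega⟩, j), ⟨trivial, rfl⟩⟩, ⟨(⟨0, by omega⟩, b), fun h => hb h.2⟩, ?_, ?_⟩
  · rintro ⟨x1, x2⟩ hx
    have hx2 : x2 ∉ ({j} : Set (Fin r)) := by
      intro h; exact hx ⟨trivial, h⟩
    rw [clsP1 (A := (univ : Set (Fin r))) (B := ({j} : Set (Fin r))) (mem_univ x1) hx2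
      (Set.singleton_nonempty j) hpq, cardP1, Set.ncard_singleton]
  · refine ⟨(⟨0, by omega⟩, b), fun h => hb h.2, ?_⟩
    have hb' : b ∉ ({j} : Set (Fin r)) := hb
    rw [clsP1 (A := (univ : Set (Fin r))) (B := ({j} : Set (Fin r))) (mem_univ _) hb'
      (Set.singleton_nonempty j) hpq, cardP1, Set.ncard_singleton]

lemma partD (hr : 5 ≤ r) (j : Fin r) (X : Set (Fin r × Fin r)) (hcol : ∀ p ∈ X, p.2 = j)
    (h2 : 2 ≤ X.ncard) (h1 : X.ncard ≤ r - 1) :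
    IsKARS (Gr r) (r - X.ncard) X := by
  have hXeq : X = (Prod.fst '' X) ×ˢ ({j} : Set (Fin r)) := by
    ext ⟨p1, p2⟩
    simp only [mem_prod, mem_image, mem_singleton_iff, Prod.exists, exists_and_right,
      exists_eq_right]
    constructor
    · intro h; exact ⟨⟨p2, h⟩, hcol _ h⟩
    · rintro ⟨⟨p2', h⟩, rfl⟩
      have hj := hcol _ h
      exact hj ▸ h
  have hcard : (Prod.fst '' X).ncard = X.ncard := by
    apply Set.ncard_image_of_injOn
    rintro ⟨p1, p2⟩ hp ⟨q1, q2⟩ hq h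
    exact Prod.ext h ((hcol _ hp).trans (hcol _ hq).symm)
  have hK := karsCol hr (A := Prod.fst '' X) j (by omega) (by omega)
  rw [hcard, ← hXeq] at hK
  exact hK

lemma partA (hr : 5 ≤ r) (k : ℕ) (hk3 : 3 ≤ k) (hk2 : k ≤ r - 2) :
    adim (Gr r) k = ((r - k : ℕ) : ℕ∞) := by
  have htr : r - k ≤ r := by omega
  set A : Set (Fin r) := Set.range (Fin.castLE htr) with hA
  have hcardA : A.ncard = r - k := by
    rw [← Nat.card_coe_set_eq, Nat.card_range_of_injective (Fin.castLE_injective htr)]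
    simp [Nat.card_eq_fintype_card]
  have hK := karsCol hr (A := A) ⟨0, by omega⟩ (by omega) (by omega)
  have hrk : r - A.ncard = k := by omega
  rw [hrk] at hK
  have hcardX : (A ×ˢ ({⟨0, by omega⟩} : Set (Fin r))).ncard = r - k := by
    rw [ncard_sprod, Set.ncard_singleton, hcardA, mul_one]
  apply le_antisymm
  · have hmem : ((A ×ˢ ({⟨0, by omega⟩} : Set (Fin r))).ncard : ℕ∞) ∈
        ((fun S => (S.ncard : ℕ∞)) '' {S : Set (Fin r × Fin r) | IsKARS (Gr r) k S}) :=
      Set.mem_image_of_mem _ hK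
    have := sInf_le hmem
    rwa [hcardX] at this
  · apply le_sInf
    rintro b ⟨S, hS, rfl⟩
    rw [Set.mem_setOf_eq, isKARS_iff] at hS
    obtain ⟨hS1, _, hmin, x, hx, hxm⟩ := hS
    have := (key hr (by omega : 3 ≤ k) hS1 hmin hx hxm).1
    exact Nat.cast_le.mpr this

lemma partB (hr : 5 ≤ r) : adim (Gr r) (r - 1) = (r : ℕ∞) := by
  have hK := karsFull hr ⟨0, by omega⟩
  have hcardX : ((univ : Set (Fin r)) ×ˢ ({⟨0, by omega⟩} : Set (Fin r))).ncard = r := by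
    rw [ncard_sprod, Set.ncard_singleton, ncard_univ, Nat.card_eq_fintype_card,
      Fintype.card_fin, mul_one]
  apply le_antisymm
  · have hmem : (((univ : Set (Fin r)) ×ˢ ({⟨0, by omega⟩} : Set (Fin r))).ncard : ℕ∞) ∈
        ((fun S => (S.ncard : ℕ∞)) '' {S : Set (Fin r × Fin r) | IsKARS (Gr r) (r - 1) S}) :=
      Set.mem_image_of_mem _ hK
    have := sInf_le hmem
    rwa [hcardX] at this
  · apply le_sInf
    rintro b ⟨S, hS, rfl⟩
    rw [Set.mem_setOf_eq, isKARS_iff] at hS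
    obtain ⟨hS1, _, hmin, x, hx, hxm⟩ := hS
    have := ((key hr (by omega : 3 ≤ r - 1) hS1 hmin hx hxm).2.1) rfl
    exact Nat.cast_le.mpr this

lemma partC (hr : 5 ≤ r) (k : ℕ) (hk1 : r ≤ k) (hk2 : k ≤ 2 * r - 3) :
    (¬∃ S : Set (Fin r × Fin r), IsKARS (Gr r) k S) ∧ adim (Gr r) k = ⊤ := by
  have hne : ¬∃ S : Set (Fin r × Fin r), IsKARS (Gr r) k S := by
    rintro ⟨S, hS⟩
    rw [isKARS_iff] at hS
    obtain ⟨hS1, _, hmin, x, hx, hxm⟩ := hS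
    have := (key hr (by omega : 3 ≤ k) hS1 hmin hx hxm).2.2
    omega
  refine ⟨hne, ?_⟩
  have hempty : {S : Set (Fin r × Fin r) | IsKARS (Gr r) k S} = ∅ :=
    Set.eq_empty_iff_forall_notMem.mpr fun S hS => hne ⟨S, hS⟩
  unfold adim
  rw [hempty, Set.image_empty, sInf_empty]

end Stmt19Aux

/-- For `r ≥ 5`: `adim_k(K_r □ K_r) = r − k` for `3 ≤ k ≤ r−2`;
`adim_{r−1}(K_r □ K_r) = r`; no `k`-ARS exists for `r ≤ k ≤ 2r−3` (so `adim_k = +∞`);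
and any set `X` of `t` vertices contained in a single column `V(K_r) × {v_j}` with
`2 ≤ t ≤ r−1` is an `(r−t)`-ARS. -/
theorem stmt19 (r : ℕ) (hr : 5 ≤ r) :
    (∀ k, 3 ≤ k → k ≤ r - 2 →
      adim ((⊤ : SimpleGraph (Fin r)).boxProd (⊤ : SimpleGraph (Fin r))) k
        = ((r - k : ℕ) : ℕ∞)) ∧
    adim ((⊤ : SimpleGraph (Fin r)).boxProd (⊤ : SimpleGraph (Fin r))) (r - 1)
      = ((r : ℕ) : ℕ∞) ∧
    (∀ k, r ≤ k → k ≤ 2 * r - 3 →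
      (¬∃ S : Set (Fin r × Fin r),
        IsKARS ((⊤ : SimpleGraph (Fin r)).boxProd (⊤ : SimpleGraph (Fin r))) k S) ∧
      adim ((⊤ : SimpleGraph (Fin r)).boxProd (⊤ : SimpleGraph (Fin r))) k = ⊤) ∧
    (∀ (j : Fin r) (X : Set (Fin r × Fin r)), (∀ p ∈ X, p.2 = j) →
      2 ≤ X.ncard → X.ncard ≤ r - 1 →
      IsKARS ((⊤ : SimpleGraph (Fin r)).boxProd (⊤ : SimpleGraph (Fin r)))
        (r - X.ncard) X) :=
  ⟨fun k hk3 hk2 => Stmt19Aux.partA hr k hk3 hk2,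
   Stmt19Aux.partB hr,
   fun k hk1 hk2 => Stmt19Aux.partC hr k hk1 hk2,
   fun j X hcol h2 h1 => Stmt19Aux.partD hr j X hcol h2 h1⟩
end
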